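/- arXiv:1401.4400 — 9 statements merged into one kernel-verified Lean document; each statement's English description precedes it below -/
import Mathlib

section
/- There is no function u : ℝ → ℝ of class C⁴ such that u(x) > 0 for all x and u''''(x) = -u(x)^{-p} for all x ∈ ℝ, where p > 0 is a fixed real number. -/
/-- If `deriv f ≤ c` on `[a, ∞)`, then `f x ≤ f a + c * (x - a)` there. -/
lemma lin_bound (f : ℝ → ℝ) (hd : Differentiable ℝ f) (a c : ℝ)
    (h : ∀ x, a ≤ x → deriv f x ≤ c) : ∀ x, a ≤ x → f x ≤ f a + c * (x - a) := by
  intro x hx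
  have hg : AntitoneOn (fun y => f y - c * y) (Set.Ici a) := by
    apply antitoneOn_of_deriv_nonpos (convex_Ici a)
    · exact (hd.continuous.sub (continuous_const.mul continuous_id)).continuousOn
    · exact (hd.sub ((differentiable_id.const_mul c))).differentiableOn
    · intro y hy
      rw [interior_Ici] at hy
      have hdy : deriv (fun y => f y - c * y) y = deriv f y - c := by
        have h1 : HasDerivAt (fun y : ℝ => c * y) c y := by
          simpa using (hasDerivAt_id y).const_mul c
        exact ((hd y).hasDerivAt.sub h1).deriv
      rw [hdy]
      linarith [h y hy.le]
  have := hg Set.self_mem_Ici hx hx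
  simp only at this
  linarith

/-- If `deriv f ≤ c < 0` on `[a, ∞)`, then `f ≤ -1` on some ray `[b, ∞)`. -/
lemma push (f : ℝ → ℝ) (hf : Differentiable ℝ f) (a c : ℝ) (hc : c < 0)
    (hd : ∀ x, a ≤ x → deriv f x ≤ c) :
    ∃ b, a ≤ b ∧ ∀ x, b ≤ x → f x ≤ -1 := by
  have hcne : c ≠ 0 := ne_of_lt hc
  set b := a + (|f a| + 1) / (-c) with hb
  have hfrac : 0 ≤ (|f a| + 1) / (-c) :=
    div_nonneg (by positivity) (by linarith)
  have hab : a ≤ b := by simp [hb]; linarith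
  have hfb : f b ≤ -1 := by
    have := lin_bound f hf a c hd b hab
    have heq : c * (b - a) = -(|f a| + 1) := by
      rw [hb]
      have : a + (|f a| + 1) / -c - a = (|f a| + 1) / -c := by ring
      rw [this, div_neg, mul_neg, mul_div_assoc', mul_comm, mul_div_assoc, div_self hcne, mul_one]
    rw [heq] at this
    have := abs_nonneg (f a)
    have := le_abs_self (f a)
    linarith
  refine ⟨b, hab, fun x hx => ?_⟩
  have hanti : AntitoneOn f (Set.Ici a) := by
    apply antitoneOn_of_deriv_nonpos (convex_Ici a) hf.continuous.continuousOn
      hf.differentiableOn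
    intro y hy
    rw [interior_Ici] at hy
    linarith [hd y hy.le]
  have := hanti (Set.mem_Ici.2 hab) (Set.mem_Ici.2 (hab.trans hx)) hx
  linarith

/-- Core one-sided contradiction: a C⁴ positive function with `u'''' < 0`
cannot have `u'''(0) ≤ 0`. -/
lemma core (u : ℝ → ℝ) (hu : ContDiff ℝ 4 u) (hpos : ∀ x, 0 < u x)
    (hneg : ∀ x, deriv (iteratedDeriv 3 u) x < 0)
    (h30 : iteratedDeriv 3 u 0 ≤ 0) : False := by
  have d3 : Differentiable ℝ (iteratedDeriv 3 u) :=
    hu.differentiable_iteratedDeriv 3 (by norm_num)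
  have d2 : Differentiable ℝ (iteratedDeriv 2 u) :=
    hu.differentiable_iteratedDeriv 2 (by norm_num)
  have d1 : Differentiable ℝ (deriv u) := by
    have := hu.differentiable_iteratedDeriv 1 (by norm_num)
    rwa [iteratedDeriv_one] at this
  have d0 : Differentiable ℝ u := hu.differentiable (by norm_num)
  have hder2 : deriv (iteratedDeriv 2 u) = iteratedDeriv 3 u :=
    (iteratedDeriv_succ (n := 2) (f := u)).symm
  have hder1 : deriv (deriv u) = iteratedDeriv 2 u := by
    rw [show iteratedDeriv 2 u = deriv (iteratedDeriv 1 u) from iteratedDeriv_succ,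
      iteratedDeriv_one]
  have hsa : StrictAnti (iteratedDeriv 3 u) := strictAnti_of_deriv_neg hneg
  have hc3 : iteratedDeriv 3 u 1 < 0 := lt_of_lt_of_le (hsa (by norm_num)) h30
  -- u''' ≤ c3 on [1, ∞)
  have h3 : ∀ x, (1 : ℝ) ≤ x → deriv (iteratedDeriv 2 u) x ≤ iteratedDeriv 3 u 1 := by
    intro x hx
    rw [hder2]
    exact hsa.antitone hx
  obtain ⟨b2, hb2, hU2⟩ := push (iteratedDeriv 2 u) d2 1 _ hc3 h3
  obtain ⟨b3, hb3, hU1⟩ := push (deriv u) d1 b2 (-1) (by norm_num)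
    (fun x hx => by rw [hder1]; exact hU2 x hx)
  obtain ⟨b4, hb4, hU0⟩ := push u d0 b3 (-1) (by norm_num)
    (fun x hx => hU1 x hx)
  linarith [hpos b4, hU0 b4 le_rfl]

theorem stmt0 (p : ℝ) (hp : 0 < p) :
    ¬ ∃ u : ℝ → ℝ, ContDiff ℝ 4 u ∧ (∀ x, 0 < u x) ∧
      ∀ x, iteratedDeriv 4 u x = -(u x) ^ (-p) := by
  rintro ⟨u, hu, hpos, heq⟩
  have hneg : ∀ x, iteratedDeriv 4 u x < 0 := by
    intro x
    rw [heq x]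
    have : (0 : ℝ) < u x ^ (-p) := Real.rpow_pos_of_pos (hpos x) _
    linarith
  have hneg' : ∀ x, deriv (iteratedDeriv 3 u) x < 0 := by
    intro x
    rw [← iteratedDeriv_succ]
    exact hneg x
  by_cases h30 : iteratedDeriv 3 u 0 ≤ 0
  · exact core u hu hpos hneg' h30
  · -- reflect
    set v := fun x => u (-x) with hv
    have hvc : ContDiff ℝ 4 v := hu.comp contDiff_neg
    have hvpos : ∀ x, 0 < v x := fun x => hpos (-x)
    have hv3 : iteratedDeriv 3 v 0 ≤ 0 := by
      rw [hv, iteratedDeriv_comp_neg 3 u 0]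
      simp only [neg_zero, smul_eq_mul]
      nlinarith [lt_of_not_ge h30]
    have hv4 : ∀ x, deriv (iteratedDeriv 3 v) x < 0 := by
      intro x
      rw [← iteratedDeriv_succ, hv, iteratedDeriv_comp_neg 4 u x]
      simp only [smul_eq_mul]
      nlinarith [hneg (-x)]
    exact core v hvc hvpos hv4 hv3
end

section
/- There is no function w : [0, ∞) → ℝ of class C⁴ such that w(t) → ∞ as t → ∞ and w''''(t) ≥ w(t)² for all t ≥ 0. -/
open Filter Set

private lemma mono_aux {f f' : ℝ → ℝ} {a b : ℝ}
    (hd : ∀ t ∈ Set.Icc a b, HasDerivAt f (f' t) t)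
    (h0 : ∀ t ∈ Set.Ioo a b, 0 ≤ f' t) :
    MonotoneOn f (Set.Icc a b) := by
  apply monotoneOn_of_deriv_nonneg (convex_Icc a b)
  · exact fun t ht => (hd t ht).continuousAt.continuousWithinAt
  · intro t ht
    rw [interior_Icc] at ht
    exact ((hd t (Set.Ioo_subset_Icc_self ht)).differentiableAt).differentiableWithinAt
  · intro t ht
    rw [interior_Icc] at ht
    rw [(hd t (Set.Ioo_subset_Icc_self ht)).deriv]
    exact h0 t ht

private lemma tendsto_aux {f f' : ℝ → ℝ} (hd : ∀ t, HasDerivAt f (f' t) t)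
    (h : ∀ᶠ t in atTop, 1 ≤ f' t) :
    Tendsto f atTop atTop := by
  obtain ⟨a, ha⟩ := Filter.eventually_atTop.1 h
  have hmono : ∀ x, a ≤ x → f a + (x - a) ≤ f x := by
    intro x hx
    have hm := mono_aux (f := fun t => f t - t) (f' := fun t => f' t - 1) (a := a) (b := x)
      (fun t _ => (hd t).sub (hasDerivAt_id t))
      (fun t ht => by have := ha t (le_of_lt ht.1); show (0:ℝ) ≤ f' t - 1; linarith)
    have h2 := hm (Set.left_mem_Icc.2 hx) (Set.right_mem_Icc.2 hx) hx
    simp only at h2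
    linarith
  have hl : Tendsto (fun x => f a + (x - a)) atTop atTop :=
    tendsto_atTop_add_const_left _ _ (tendsto_atTop_add_const_right _ _ tendsto_id)
  apply tendsto_atTop_mono' atTop _ hl
  filter_upwards [Filter.eventually_ge_atTop a] with x hx using hmono x hx

private lemma hasDerivAt_v (c : ℝ) (n : ℕ) (t : ℝ) (h : c - t ≠ 0) :
    HasDerivAt (fun s => 140 * ((n+3).factorial : ℝ) / (c - s)^(n+4))
      (140 * ((n+1+3).factorial : ℝ) / (c - t)^(n+1+4)) t := by
  have hne' : (c - t)^(n+4) ≠ 0 := pow_ne_zero _ h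
  have h1 : HasDerivAt (fun s : ℝ => c - s) (-1) t := (hasDerivAt_id t).const_sub c
  have hg : HasDerivAt (fun s : ℝ => (c - s)^(n+4)) ((((n+4):ℕ):ℝ) * (c - t)^(n+3) * (-1)) t := by
    have h2 := h1.fun_pow (n+4)
    simpa using h2
  have hdiv := (hasDerivAt_const t (140 * ((n+3).factorial : ℝ))).fun_div hg hne'
  refine hdiv.congr_deriv ?_
  have hfact : (((n+1+3).factorial : ℕ) : ℝ) = ((n:ℝ)+4) * ((n+3).factorial : ℝ) := by
    rw [show n+1+3 = (n+3)+1 from rfl, Nat.factorial_succ]; push_cast; ring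
  rw [hfact]
  field_simp
  push_cast
  ring

private noncomputable def vv (c : ℝ) (n : ℕ) (t : ℝ) : ℝ :=
  140 * ((n+3).factorial : ℝ) / (c - t)^(n+4)

private lemma vv_hasDerivAt {c t : ℝ} (n : ℕ) (h : c - t ≠ 0) :
    HasDerivAt (vv c n) (vv c (n+1) t) t := hasDerivAt_v c n t h

private lemma vv_sq {c t : ℝ} (h : c - t ≠ 0) : (vv c 0 t)^2 = vv c 4 t := by
  unfold vv
  rw [div_pow, ← pow_mul]
  norm_num [Nat.factorial]

private lemma vv_pos {c t : ℝ} (n : ℕ) (h : t < c) : 0 < vv c n t := by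
  have h1 : 0 < c - t := by linarith
  unfold vv
  have h2 : (0:ℝ) < ((n+3).factorial : ℝ) := by exact_mod_cast (n+3).factorial_pos
  positivity

theorem stmt3 :
    ¬ ∃ w : ℝ → ℝ, ContDiff ℝ 4 w ∧
      Filter.Tendsto w Filter.atTop Filter.atTop ∧
      ∀ t ≥ (0 : ℝ), (w t) ^ 2 ≤ iteratedDeriv 4 w t := by
  rintro ⟨w, hw, hlim, hineq⟩
  have hder : ∀ n : ℕ, n < 4 → ∀ t : ℝ, HasDerivAt (iteratedDeriv n w) (iteratedDeriv (n+1) w t) t := by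
    intro n hn t
    have hdiff : Differentiable ℝ (iteratedDeriv n w) :=
      hw.differentiable_iteratedDeriv n (by exact_mod_cast hn)
    have h2 := (hdiff t).hasDerivAt
    rwa [iteratedDeriv_succ]
  have hW0 : iteratedDeriv 0 w = w := iteratedDeriv_zero
  have hd0 : ∀ t : ℝ, HasDerivAt w (iteratedDeriv 1 w t) t := by
    intro t; have := hder 0 (by norm_num) t; rwa [hW0] at this
  -- all derivatives tend to infinity
  have h3t : Tendsto (iteratedDeriv 3 w) atTop atTop := by
    apply tendsto_aux (hder 3 (by norm_num))
    filter_upwards [hlim.eventually_ge_atTop 1, eventually_ge_atTop (0:ℝ)] with t h1 h0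
    have h2 := hineq t h0
    nlinarith
  have h2t : Tendsto (iteratedDeriv 2 w) atTop atTop :=
    tendsto_aux (hder 2 (by norm_num)) (h3t.eventually_ge_atTop 1)
  have h1t : Tendsto (iteratedDeriv 1 w) atTop atTop :=
    tendsto_aux (hder 1 (by norm_num)) (h2t.eventually_ge_atTop 1)
  have hall : ∀ᶠ t in atTop, 1 ≤ w t ∧ 1 ≤ iteratedDeriv 1 w t ∧ 1 ≤ iteratedDeriv 2 w t ∧
      1 ≤ iteratedDeriv 3 w t ∧ 0 ≤ t := by
    filter_upwards [hlim.eventually_ge_atTop 1, h1t.eventually_ge_atTop 1,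
      h2t.eventually_ge_atTop 1, h3t.eventually_ge_atTop 1, eventually_ge_atTop (0:ℝ)] with
      t a b c d e
    exact ⟨a, b, c, d, e⟩
  obtain ⟨T, hT⟩ := eventually_atTop.1 hall
  have hT0 : (0:ℝ) ≤ T := (hT T le_rfl).2.2.2.2
  set c := T + 10 with hc
  have hcT : c - T = 10 := by rw [hc]; ring
  -- initial comparisons at T
  have hv0T : vv c 0 T < 1 := by unfold vv; rw [hcT]; norm_num [Nat.factorial]
  have hv1T : vv c 1 T < 1 := by unfold vv; rw [hcT]; norm_num [Nat.factorial]
  have hv2T : vv c 2 T < 1 := by unfold vv; rw [hcT]; norm_num [Nat.factorial]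
  have hv3T : vv c 3 T < 1 := by unfold vv; rw [hcT]; norm_num [Nat.factorial]
  -- comparison claim
  have claim : ∀ t ∈ Ico T c, vv c 0 t ≤ w t := by
    by_contra hcon
    push_neg at hcon
    obtain ⟨t₀, ht₀, hlt₀⟩ := hcon
    set V : Set ℝ := {t | t ∈ Ico T c ∧ (w t < vv c 0 t ∨ iteratedDeriv 1 w t < vv c 1 t ∨
      iteratedDeriv 2 w t < vv c 2 t ∨ iteratedDeriv 3 w t < vv c 3 t)} with hV
    have hVne : V.Nonempty := ⟨t₀, ht₀, Or.inl hlt₀⟩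
    have hbdd : BddBelow V := ⟨T, fun x hx => hx.1.1⟩
    set s := sInf V with hs
    have hsT : T ≤ s := le_csInf hVne fun x hx => hx.1.1
    have hsc : s < c := lt_of_le_of_lt (csInf_le hbdd ⟨ht₀, Or.inl hlt₀⟩) ht₀.2
    have hpre : ∀ t, T ≤ t → t < s → (vv c 0 t ≤ w t ∧ vv c 1 t ≤ iteratedDeriv 1 w t ∧
        vv c 2 t ≤ iteratedDeriv 2 w t ∧ vv c 3 t ≤ iteratedDeriv 3 w t) := by
      intro t h1 h2
      have hnot : t ∉ V := fun hmem => absurd (csInf_le hbdd hmem) (not_le.2 h2)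
      simp only [hV, mem_setOf_eq, not_and, not_or, not_lt] at hnot
      exact hnot ⟨h1, lt_trans h2 hsc⟩
    have hne : ∀ t ∈ Icc T s, c - t ≠ 0 := by
      intro t ht
      have : t < c := lt_of_le_of_lt ht.2 hsc
      exact ne_of_gt (by linarith)
    -- cascade of monotonicity
    have mono3 : MonotoneOn (fun t => iteratedDeriv 3 w t - vv c 3 t) (Icc T s) := by
      apply mono_aux (f' := fun t => iteratedDeriv 4 w t - vv c 4 t)
      · exact fun t ht => (hder 3 (by norm_num) t).sub (vv_hasDerivAt 3 (hne t ht))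
      · intro t ht
        have hpr := (hpre t (le_of_lt ht.1) ht.2).1
        have hvp : 0 < vv c 0 t := vv_pos 0 (lt_trans ht.2 hsc)
        have hsq : (vv c 0 t)^2 = vv c 4 t := vv_sq (hne t (Ioo_subset_Icc_self ht))
        have hge := hineq t (le_trans hT0 (le_of_lt ht.1))
        show (0:ℝ) ≤ iteratedDeriv 4 w t - vv c 4 t
        nlinarith
    have pos3 : ∀ t ∈ Icc T s, 0 < iteratedDeriv 3 w t - vv c 3 t := by
      intro t ht
      have hm := mono3 (Set.left_mem_Icc.2 hsT) ht ht.1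
      have hTg : 1 ≤ iteratedDeriv 3 w T := (hT T le_rfl).2.2.2.1
      simp only at hm
      linarith
    have mono2 : MonotoneOn (fun t => iteratedDeriv 2 w t - vv c 2 t) (Icc T s) := by
      apply mono_aux (f' := fun t => iteratedDeriv 3 w t - vv c 3 t)
      · exact fun t ht => (hder 2 (by norm_num) t).sub (vv_hasDerivAt 2 (hne t ht))
      · exact fun t ht => le_of_lt (pos3 t (Ioo_subset_Icc_self ht))
    have pos2 : ∀ t ∈ Icc T s, 0 < iteratedDeriv 2 w t - vv c 2 t := by
      intro t ht
      have hm := mono2 (Set.left_mem_Icc.2 hsT) ht ht.1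
      have hTg : 1 ≤ iteratedDeriv 2 w T := (hT T le_rfl).2.2.1
      simp only at hm
      linarith
    have mono1 : MonotoneOn (fun t => iteratedDeriv 1 w t - vv c 1 t) (Icc T s) := by
      apply mono_aux (f' := fun t => iteratedDeriv 2 w t - vv c 2 t)
      · exact fun t ht => (hder 1 (by norm_num) t).sub (vv_hasDerivAt 1 (hne t ht))
      · exact fun t ht => le_of_lt (pos2 t (Ioo_subset_Icc_self ht))
    have pos1 : ∀ t ∈ Icc T s, 0 < iteratedDeriv 1 w t - vv c 1 t := by
      intro t ht
      have hm := mono1 (Set.left_mem_Icc.2 hsT) ht ht.1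
      have hTg : 1 ≤ iteratedDeriv 1 w T := (hT T le_rfl).2.1
      simp only at hm
      linarith
    have mono0 : MonotoneOn (fun t => w t - vv c 0 t) (Icc T s) := by
      apply mono_aux (f' := fun t => iteratedDeriv 1 w t - vv c 1 t)
      · exact fun t ht => (hd0 t).sub (vv_hasDerivAt 0 (hne t ht))
      · exact fun t ht => le_of_lt (pos1 t (Ioo_subset_Icc_self ht))
    have pos0 : ∀ t ∈ Icc T s, 0 < w t - vv c 0 t := by
      intro t ht
      have hm := mono0 (Set.left_mem_Icc.2 hsT) ht ht.1
      have hTg : 1 ≤ w T := (hT T le_rfl).1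
      simp only at hm
      linarith
    -- continuity at s gives a neighborhood of positivity, contradicting sInf
    have hsmem : s ∈ Icc T s := ⟨hsT, le_rfl⟩
    have hnes := hne s hsmem
    have hc0 : ContinuousAt (fun t => w t - vv c 0 t) s :=
      ((hd0 s).continuousAt).sub (vv_hasDerivAt 0 hnes).continuousAt
    have hc1 : ContinuousAt (fun t => iteratedDeriv 1 w t - vv c 1 t) s :=
      ((hder 1 (by norm_num) s).continuousAt).sub (vv_hasDerivAt 1 hnes).continuousAt
    have hc2 : ContinuousAt (fun t => iteratedDeriv 2 w t - vv c 2 t) s :=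
      ((hder 2 (by norm_num) s).continuousAt).sub (vv_hasDerivAt 2 hnes).continuousAt
    have hc3 : ContinuousAt (fun t => iteratedDeriv 3 w t - vv c 3 t) s :=
      ((hder 3 (by norm_num) s).continuousAt).sub (vv_hasDerivAt 3 hnes).continuousAt
    have e0 : ∀ᶠ x in nhds s, 0 < w x - vv c 0 x := hc0 (Ioi_mem_nhds (pos0 s hsmem))
    have e1 : ∀ᶠ x in nhds s, 0 < iteratedDeriv 1 w x - vv c 1 x :=
      hc1 (Ioi_mem_nhds (pos1 s hsmem))
    have e2 : ∀ᶠ x in nhds s, 0 < iteratedDeriv 2 w x - vv c 2 x :=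
      hc2 (Ioi_mem_nhds (pos2 s hsmem))
    have e3 : ∀ᶠ x in nhds s, 0 < iteratedDeriv 3 w x - vv c 3 x :=
      hc3 (Ioi_mem_nhds (pos3 s hsmem))
    obtain ⟨δ, hδpos, hδ⟩ := Metric.eventually_nhds_iff.1 ((e0.and e1).and (e2.and e3))
    obtain ⟨x, hxV, hxlt⟩ := exists_lt_of_csInf_lt hVne (show sInf V < s + δ by rw [← hs]; linarith)
    have hxs : s ≤ x := csInf_le hbdd hxV
    have hdist : dist x s < δ := by
      rw [Real.dist_eq, abs_of_nonneg (by linarith)]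
      linarith
    have hgood := hδ hdist
    rcases hxV.2 with h | h | h | h
    · linarith [hgood.1.1]
    · linarith [hgood.1.2]
    · linarith [hgood.2.1]
    · linarith [hgood.2.2]
  -- final contradiction: v blows up at c, but w is bounded on [T, c]
  obtain ⟨x, hx, hmax⟩ := isCompact_Icc.exists_isMaxOn (nonempty_Icc.2 (by linarith : T ≤ c))
    hw.continuous.continuousOn
  set M := w x with hM
  have hM1 : 1 ≤ M := le_trans (hT T le_rfl).1 (hmax (left_mem_Icc.2 (by linarith : T ≤ c)))
  set ε := min 1 (840 / (M + 1)) with hε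
  have hεpos : 0 < ε := lt_min one_pos (by positivity)
  have hε1 : ε ≤ 1 := min_le_left _ _
  have hεM : ε * (M + 1) ≤ 840 := by
    have h1 := min_le_right 1 (840 / (M + 1))
    rw [← hε, le_div_iff₀ (by linarith : (0:ℝ) < M + 1)] at h1
    exact h1
  have htmem : c - ε ∈ Icc T c := ⟨by simp only [hc]; linarith, by linarith⟩
  have htmem' : c - ε ∈ Ico T c := ⟨htmem.1, by linarith⟩
  have h1 := claim _ htmem'
  have h2 := hmax htmem
  have hvval : vv c 0 (c - ε) = 840 / ε ^ 4 := by
    unfold vv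
    rw [show c - (c - ε) = ε by ring]
    norm_num [Nat.factorial]
  have hε4 : ε ^ 4 ≤ ε := by
    have h3 : ε ^ 3 ≤ 1 := pow_le_one₀ (le_of_lt hεpos) hε1
    nlinarith
  have hbig : M < 840 / ε ^ 4 := by
    rw [lt_div_iff₀ (by positivity)]
    nlinarith
  rw [hvval] at h1
  simp only [mem_setOf_eq] at h2
  rw [← hM] at h2
  linarith
end

section
/- There is no pair of C² functions U, W : [0,∞) → ℝ and integer N ≥ 3 such that: W > 0 everywhere, W is nonincreasing, W(r) → α for some α > 0, U > 0, U'(0) = 0, U''(r) + (N-1)U'(r)/r = W(r) for r > 0, and W''(r) + (N-1)W'(r)/r = -1/U(r) for r > 0. -/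
open Set

/-- Comparison lemma: if `f' ≤ g'` on `(a,∞)` and `f a ≤ g a`, then `f ≤ g` on `[a,∞)`. -/
lemma cmp_le {a : ℝ} {f g f' g' : ℝ → ℝ}
    (hfc : ContinuousOn f (Set.Ici a)) (hgc : ContinuousOn g (Set.Ici a))
    (hfd : ∀ x ∈ Set.Ioi a, HasDerivAt f (f' x) x)
    (hgd : ∀ x ∈ Set.Ioi a, HasDerivAt g (g' x) x)
    (hle : ∀ x ∈ Set.Ioi a, f' x ≤ g' x)
    (h0 : f a ≤ g a) : ∀ x ∈ Set.Ici a, f x ≤ g x := by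
  intro x hx
  have hmono : MonotoneOn (fun y => g y - f y) (Set.Ici a) := by
    apply monotoneOn_of_deriv_nonneg (convex_Ici a) (hgc.sub hfc)
    · intro y hy
      rw [interior_Ici] at hy
      exact ((hgd y hy).sub (hfd y hy)).differentiableAt.differentiableWithinAt
    · intro y hy
      rw [interior_Ici] at hy
      rw [((hgd y hy).sub (hfd y hy)).deriv]
      linarith [hle y hy]
  have h := hmono Set.self_mem_Ici hx hx
  simp only at h
  linarith

theorem stmt9 (N : ℕ) (hN : 3 ≤ N) (U W : ℝ → ℝ) (α : ℝ) (hα : 0 < α)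
    (hU : ContDiff ℝ 2 U) (hW : ContDiff ℝ 2 W)
    (hWpos : ∀ r ≥ (0 : ℝ), 0 < W r)
    (hWmono : AntitoneOn W (Set.Ici 0))
    (hWlim : Filter.Tendsto W Filter.atTop (nhds α))
    (hUpos : ∀ r ≥ (0 : ℝ), 0 < U r)
    (hU0 : deriv U 0 = 0)
    (heqU : ∀ r > (0 : ℝ),
      deriv (deriv U) r + (N - 1) * deriv U r / r = W r)
    (heqW : ∀ r > (0 : ℝ),
      deriv (deriv W) r + (N - 1) * deriv W r / r = -(1 / U r)) :
    False := by
  obtain ⟨k, rfl⟩ : ∃ k, N = k + 3 := ⟨N - 3, by omega⟩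
  set n : ℕ := k + 2 with hn
  -- basic regularity
  have hU2 : Differentiable ℝ U ∧ ContDiff ℝ 1 (deriv U) := by
    have := hU
    rw [show (2 : WithTop ℕ∞) = 1 + 1 from rfl] at this
    rw [contDiff_succ_iff_deriv] at this
    exact ⟨this.1, this.2.2⟩
  have hW2 : Differentiable ℝ W ∧ ContDiff ℝ 1 (deriv W) := by
    have := hW
    rw [show (2 : WithTop ℕ∞) = 1 + 1 from rfl] at this
    rw [contDiff_succ_iff_deriv] at this
    exact ⟨this.1, this.2.2⟩
  have hDUd : Differentiable ℝ (deriv U) := hU2.2.differentiable one_ne_zero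
  have hDWd : Differentiable ℝ (deriv W) := hW2.2.differentiable one_ne_zero
  have hNcast : ((k + 3 : ℕ) : ℝ) - 1 = (n : ℝ) := by push_cast [hn]; ring
  -- derivative of r^n * f'(r)
  have key : ∀ (f : ℝ → ℝ), Differentiable ℝ (deriv f) → ∀ r > (0:ℝ),
      HasDerivAt (fun x => x ^ n * deriv f x)
        (r ^ n * (deriv (deriv f) r + (((k + 3 : ℕ) : ℝ) - 1) * deriv f r / r)) r := by
    intro f hf r hr
    have h1 : HasDerivAt (fun x => x ^ n * deriv f x)
        ((n : ℝ) * r ^ (n - 1) * deriv f r + r ^ n * deriv (deriv f) r) r :=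
      (hasDerivAt_pow n r).mul (hf r).hasDerivAt
    convert h1 using 1
    have hr0 : r ≠ 0 := ne_of_gt hr
    have hpow : r ^ n = r ^ (n - 1) * r := by
      rw [← pow_succ]; congr 1
    rw [hNcast]
    field_simp
    rw [hpow]; ring
  -- g := r^n * U'
  have hgd : ∀ r ∈ Set.Ioi (0:ℝ), HasDerivAt (fun x => x ^ n * deriv U x) (r ^ n * W r) r := by
    intro r hr
    have := key U hDUd r hr
    rwa [heqU r hr] at this
  have hgc : ContinuousOn (fun x : ℝ => x ^ n * deriv U x) (Set.Ici 0) :=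
    ((continuous_pow n).mul hU2.2.continuous).continuousOn
  have hW0pos : 0 < W 0 := hWpos 0 le_rfl
  have hU0pos : 0 < U 0 := hUpos 0 le_rfl
  -- comparison: r^n U' ≤ W 0 * r^(n+1)
  have hgle : ∀ r ∈ Set.Ici (0:ℝ), r ^ n * deriv U r ≤ W 0 * r ^ (n + 1) := by
    apply cmp_le (g' := fun r => W 0 * ((n + 1 : ℝ) * r ^ n)) hgc
      (by fun_prop) hgd
    · intro r _
      exact (hasDerivAt_pow (n + 1) r).const_mul (W 0) |>.congr_deriv (by push_cast; ring)
    · intro r hr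
      have hrpos : (0:ℝ) < r := hr
      have hWle : W r ≤ W 0 := hWmono Set.self_mem_Ici (le_of_lt hrpos) (le_of_lt hrpos)
      have h1 : (0:ℝ) ≤ r ^ n := by positivity
      have hmul := mul_le_mul_of_nonneg_left hWle h1
      have hnn : (0:ℝ) ≤ (n:ℝ) * (r ^ n * W 0) :=
        mul_nonneg (Nat.cast_nonneg n) (mul_nonneg h1 hW0pos.le)
      nlinarith
    · simp [hn]
  have hU'le : ∀ r ∈ Set.Ioi (0:ℝ), deriv U r ≤ W 0 * r := by
    intro r hr
    have hrpos : (0:ℝ) < r := hr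
    have h0 := hgle r (le_of_lt hrpos)
    have hrp : (0:ℝ) < r ^ n := pow_pos hrpos n
    have hpow : r ^ (n + 1) = r ^ n * r := pow_succ r n
    rw [hpow] at h0
    have h2 : r ^ n * deriv U r ≤ r ^ n * (W 0 * r) := by nlinarith
    exact (mul_le_mul_iff_of_pos_left hrp).mp h2
  -- U r ≤ U 0 + W 0 * (n+1) * r^2 / 2
  have hUle : ∀ r ∈ Set.Ici (0:ℝ), U r ≤ U 0 + W 0 / 2 * r ^ 2 := by
    apply cmp_le (f' := deriv U) (g' := fun r => W 0 * r)
      hU2.1.continuous.continuousOn (by fun_prop)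
    · intro r _; exact (hU2.1 r).hasDerivAt
    · intro r _
      have : HasDerivAt (fun x : ℝ => U 0 + W 0 / 2 * x ^ 2)
          (W 0 / 2 * (2 * r)) r := by
        simpa using ((hasDerivAt_pow 2 r).const_mul (W 0 / 2)).const_add (U 0)
      exact this.congr_deriv (by ring)
    · exact hU'le
    · simp
  set C : ℝ := U 0 + W 0 / 2 with hC
  have hCpos : 0 < C := by positivity
  -- for r ≥ 1, U r ≤ C * r^2
  have hUC : ∀ r ≥ (1:ℝ), U r ≤ C * r ^ 2 := by
    intro r hr
    have h1 : (1:ℝ) ≤ r ^ 2 := by nlinarith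
    have := hUle r (by linarith : (0:ℝ) ≤ r)
    rw [hC]
    nlinarith
  -- h := r^n * W'
  have hhd : ∀ r ∈ Set.Ioi (0:ℝ),
      HasDerivAt (fun x => x ^ n * deriv W x) (-(r ^ n / U r)) r := by
    intro r hr
    have := key W hDWd r hr
    rw [heqW r hr] at this
    convert this using 1
    have : U r ≠ 0 := ne_of_gt (hUpos r (le_of_lt hr))
    field_simp
  have hhc : ContinuousOn (fun x : ℝ => x ^ n * deriv W x) (Set.Ici 0) :=
    ((continuous_pow n).mul hW2.2.continuous).continuousOn
  -- h is ≤ 0 on [0,∞)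
  have hhnonpos : ∀ r ∈ Set.Ici (0:ℝ), r ^ n * deriv W r ≤ 0 := by
    have := cmp_le (f := fun x : ℝ => x ^ n * deriv W x) (g := fun _ => (0:ℝ))
      (f' := fun r => -(r ^ n / U r)) (g' := fun _ => (0:ℝ)) hhc continuousOn_const hhd
      (fun r _ => hasDerivAt_const r 0)
      (fun r hr => by
        have hrpos : (0:ℝ) < r := hr
        have := hUpos r (le_of_lt hrpos)
        have : 0 < r ^ n / U r := by positivity
        linarith)
      (by simp [hn])
    exact this
  -- on [1,∞): h r ≤ -(r^(n-1) - 1)/((n-1) C)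
  have hhle : ∀ r ∈ Set.Ici (1:ℝ),
      r ^ n * deriv W r ≤ (1 ^ n * deriv W 1) + (-(r ^ (k+1) - 1) / ((k+1 : ℝ) * C)) := by
    apply cmp_le (f' := fun r => -(r ^ n / U r))
      (g' := fun r => -(r ^ k / C))
      (hhc.mono (Set.Ici_subset_Ici.mpr (by norm_num)))
      (by fun_prop (disch := positivity))
      (fun r hr => hhd r (by simp only [Set.mem_Ioi] at hr ⊢; linarith))
    · intro r _
      have h1 : HasDerivAt (fun x : ℝ => 1 ^ n * deriv W 1 + -(x ^ (k+1) - 1) / ((k+1 : ℝ) * C))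
          (-((k+1 : ℝ) * r ^ k) / ((k+1 : ℝ) * C)) r := by
        have hp := hasDerivAt_pow (k+1) r
        simp only [Nat.add_sub_cancel] at hp
        have : HasDerivAt (fun x : ℝ => -(x ^ (k+1) - 1) / ((k+1 : ℝ) * C))
            (-((k+1 : ℝ) * r ^ k) / ((k+1 : ℝ) * C)) r := by
          have := ((hp.sub_const 1).neg).div_const ((k+1 : ℝ) * C)
          exact this.congr_deriv (by push_cast; ring)
        exact this.const_add _
      refine h1.congr_deriv ?_
      have : (k+1 : ℝ) ≠ 0 := by positivity
      field_simp
    · intro r hr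
      have hr1 : (1:ℝ) < r := hr
      have hrpos : (0:ℝ) < r := by linarith
      have hUr : 0 < U r := hUpos r (le_of_lt hrpos)
      have hUCr : U r ≤ C * r ^ 2 := hUC r (le_of_lt hr1)
      have h1 : r ^ k / C ≤ r ^ n / U r := by
        rw [div_le_div_iff₀ hCpos hUr]
        calc r ^ k * U r ≤ r ^ k * (C * r ^ 2) := by nlinarith [pow_pos hrpos k]
          _ = r ^ n * C := by rw [hn]; ring
      linarith
    · simp
  -- final comparison on [2,∞)
  set c : ℝ := 1 / (2 * (k+1 : ℝ) * C) with hc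
  have hcpos : 0 < c := by rw [hc]; positivity
  have hW'le : ∀ r ∈ Set.Ioi (2:ℝ), deriv W r ≤ -(c / r) := by
    intro r hr
    have hr2 : (2:ℝ) < r := hr
    have hrpos : (0:ℝ) < r := by linarith
    have hle := hhle r (by simp only [Set.mem_Ici]; linarith)
    have hW1 : deriv W 1 ≤ 0 := by
      have := hhnonpos 1 (by norm_num)
      simpa using this
    have h2 : (2:ℝ) ≤ r ^ (k+1) := by
      calc (2:ℝ) = 2 ^ 1 := by norm_num
        _ ≤ 2 ^ (k+1) := by
            apply pow_le_pow_right₀ (by norm_num) (by omega)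
        _ ≤ r ^ (k+1) := by
            apply pow_le_pow_left₀ (by norm_num) (le_of_lt hr2)
    -- r^n W' ≤ -(r^(k+1)-1)/((k+1)C) ≤ -r^(k+1)/(2(k+1)C)
    have h3 : r ^ n * deriv W r ≤ -(r ^ (k+1)) / (2 * (k+1 : ℝ) * C) := by
      have hden : (0:ℝ) < (k+1 : ℝ) * C := by positivity
      have : -(r ^ (k+1) - 1) / ((k+1 : ℝ) * C) ≤ -(r ^ (k+1)) / (2 * (k+1 : ℝ) * C) := by
        rw [div_le_div_iff₀ hden (by positivity)]
        nlinarith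
      simp only [one_pow, one_mul] at hle
      linarith
    -- divide by r^n : note r^n = r^(k+1) * r
    have hrn : r ^ n = r ^ (k+1) * r := by rw [hn, ← pow_succ]
    have hrk : (0:ℝ) < r ^ (k+1) := pow_pos hrpos (k+1)
    have hrn' : (0:ℝ) < r ^ n := pow_pos hrpos n
    rw [hc]
    rw [← mul_le_mul_iff_of_pos_right hrn']
    calc deriv W r * r ^ n = r ^ n * deriv W r := by ring
      _ ≤ -(r ^ (k+1)) / (2 * (k+1 : ℝ) * C) := h3
      _ = -(1 / (2 * (k+1 : ℝ) * C) / r) * r ^ n := by rw [hrn]; field_simp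
  -- W r ≤ W 2 - c * (log r - log 2) on [2,∞)
  have hWcmp : ∀ r ∈ Set.Ici (2:ℝ), W r ≤ W 2 - c * (Real.log r - Real.log 2) := by
    apply cmp_le (f' := deriv W) (g' := fun r => -(c / r))
      hW.continuous.continuousOn
    · apply ContinuousOn.sub continuousOn_const
      apply ContinuousOn.mul continuousOn_const
      apply ContinuousOn.sub _ continuousOn_const
      apply Real.continuousOn_log.mono
      intro x hx
      simp only [Set.mem_Ici] at hx
      simp only [Set.mem_compl_iff, Set.mem_singleton_iff]
      intro h
      rw [h] at hx
      norm_num at hx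
    · intro r _; exact (hW2.1 r).hasDerivAt
    · intro r hr
      have hr2 : (2:ℝ) < r := hr
      have hr0 : r ≠ 0 := by positivity
      have hl : HasDerivAt (fun x : ℝ => W 2 - c * (Real.log x - Real.log 2)) (-(c * r⁻¹)) r := by
        have := ((Real.hasDerivAt_log hr0).sub_const (Real.log 2)).const_mul c
        exact this.const_sub (W 2)
      exact hl.congr_deriv (by rw [div_eq_mul_inv])
    · exact hW'le
    · simp
  -- choose R large
  set R : ℝ := 2 * Real.exp (W 2 / c + 1) with hR
  have hexp : (1:ℝ) < Real.exp (W 2 / c + 1) := by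
    rw [← Real.exp_zero]
    apply Real.exp_lt_exp.mpr
    have : 0 < W 2 := hWpos 2 (by norm_num)
    positivity
  have hR2 : (2:ℝ) ≤ R := by rw [hR]; nlinarith
  have hlogR : Real.log R = Real.log 2 + (W 2 / c + 1) := by
    rw [hR, Real.log_mul (by norm_num) (by positivity), Real.log_exp]
  have hfin := hWcmp R (Set.mem_Ici.mpr hR2)
  rw [hlogR] at hfin
  have hWR : 0 < W R := hWpos R (by linarith)
  have hc0 : c ≠ 0 := ne_of_gt hcpos
  have : W 2 - c * (Real.log 2 + (W 2 / c + 1) - Real.log 2) = -c := by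
    field_simp
    ring
  rw [this] at hfin
  linarith
end

section
/- For N = 4 and c = 1/(8√6) (with appropriate normalization), the function u : ℝ⁴ → ℝ defined by u(x) = -4 ln(1 + c|x|²) satisfies Δ²u(x) = e^{u(x)} for all x ∈ ℝ⁴. -/
/-- The Laplacian of `f : ℝ^n → ℝ` at `x`: sum of the second derivatives
along the coordinate directions. -/
noncomputable def lap {n : ℕ} (f : EuclideanSpace ℝ (Fin n) → ℝ)
    (x : EuclideanSpace ℝ (Fin n)) : ℝ :=
  ∑ i : Fin n, iteratedDeriv 2 (fun t : ℝ => f (x + t • EuclideanSpace.single i (1 : ℝ))) 0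

lemma quadDeriv (c s a : ℝ) (t : ℝ) :
    HasDerivAt (fun t : ℝ => 1 + c * (s + 2 * a * t + t ^ 2)) (2*c*a + 2*c*t) t := by
  have h1 : HasDerivAt (fun t : ℝ => t ^ 2) (2 * t) t := by simpa using hasDerivAt_pow 2 t
  have h2 : HasDerivAt (fun t : ℝ => 2 * a * t) (2 * a) t := by
    simpa using (hasDerivAt_id t).const_mul (2*a)
  have h : HasDerivAt (fun t : ℝ => s + 2 * a * t + t ^ 2) (2*a + 2*t) t := by
    simpa [add_assoc] using ((h2.add h1).const_add s)
  have := (h.const_mul c).const_add 1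
  refine this.congr_deriv ?_
  ring

lemma linDeriv (c a : ℝ) (t : ℝ) : HasDerivAt (fun t : ℝ => 2*c*a + 2*c*t) (2*c) t := by
  simpa using ((hasDerivAt_id t).const_mul (2*c)).const_add (2*c*a)

lemma stepA (c s a : ℝ)
    (hpos : ∀ t : ℝ, 0 < 1 + c * (s + 2 * a * t + t ^ 2)) :
    iteratedDeriv 2 (fun t => -4 * Real.log (1 + c * (s + 2 * a * t + t ^ 2))) 0
      = (-8*c*(1+c*s) + 16*c^2*a^2) / (1+c*s)^2 := by
  have hd1 : ∀ t : ℝ, HasDerivAt (fun t => -4 * Real.log (1 + c * (s + 2 * a * t + t ^ 2)))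
      (-4 * ((2*c*a + 2*c*t) / (1 + c * (s + 2 * a * t + t ^ 2)))) t :=
    fun t => ((quadDeriv c s a t).log (hpos t).ne').const_mul (-4)
  have hderiv : deriv (fun t => -4 * Real.log (1 + c * (s + 2 * a * t + t ^ 2)))
      = fun t => -4 * ((2*c*a + 2*c*t) / (1 + c * (s + 2 * a * t + t ^ 2))) :=
    funext fun t => (hd1 t).deriv
  have h2 : iteratedDeriv 2 (fun t => -4 * Real.log (1 + c * (s + 2 * a * t + t ^ 2)))
      = deriv (deriv (fun t => -4 * Real.log (1 + c * (s + 2 * a * t + t ^ 2)))) := by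
    rw [iteratedDeriv_succ, iteratedDeriv_one]
  rw [h2, hderiv]
  have hd2 : HasDerivAt (fun t => -4 * ((2*c*a + 2*c*t) / (1 + c * (s + 2 * a * t + t ^ 2))))
      (-4 * ((2*c * (1 + c * (s + 2 * a * 0 + 0 ^ 2)) - (2*c*a + 2*c*0) * (2*c*a + 2*c*0))
        / (1 + c * (s + 2 * a * 0 + 0 ^ 2)) ^ 2)) 0 :=
    ((linDeriv c a 0).div (quadDeriv c s a 0) (hpos 0).ne').const_mul (-4)
  rw [hd2.deriv]
  have h0 : (0:ℝ) < 1 + c * s := by have := hpos 0; simpa using this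
  simp only [mul_zero, add_zero, ne_eq, OfNat.ofNat_ne_zero, not_false_eq_true, zero_pow]
  field_simp
  ring

lemma stepB (c s a : ℝ)
    (hpos : ∀ t : ℝ, 0 < 1 + c * (s + 2 * a * t + t ^ 2)) :
    iteratedDeriv 2 (fun t => -16*c*((1 + c * (s + 2 * a * t + t ^ 2))⁻¹
        + ((1 + c * (s + 2 * a * t + t ^ 2)) ^ 2)⁻¹)) 0
      = (32*c^2*(1+c*s)^2 + 64*c^2*(1+c*s) - 128*c^3*a^2*(1+c*s) - 384*c^3*a^2)
          / (1+c*s)^4 := by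
  have hQ := quadDeriv c s a
  have hne : ∀ t : ℝ, (1 + c * (s + 2 * a * t + t ^ 2)) ≠ 0 := fun t => (hpos t).ne'
  have hne2 : ∀ t : ℝ, (1 + c * (s + 2 * a * t + t ^ 2)) ^ 2 ≠ 0 := fun t => pow_ne_zero 2 (hne t)
  have hd1 : ∀ t : ℝ, HasDerivAt (fun t => -16*c*((1 + c * (s + 2 * a * t + t ^ 2))⁻¹
      + ((1 + c * (s + 2 * a * t + t ^ 2)) ^ 2)⁻¹))
      (-16*c*(-(2*c*a + 2*c*t) / (1 + c * (s + 2 * a * t + t ^ 2)) ^ 2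
        + -(2 * (1 + c * (s + 2 * a * t + t ^ 2)) ^ 1 * (2*c*a + 2*c*t))
            / ((1 + c * (s + 2 * a * t + t ^ 2)) ^ 2) ^ 2)) t :=
    fun t => (((hQ t).inv (hne t)).add (((hQ t).pow 2).inv (hne2 t))).const_mul (-16*c)
  have hderiv : deriv (fun t => -16*c*((1 + c * (s + 2 * a * t + t ^ 2))⁻¹
      + ((1 + c * (s + 2 * a * t + t ^ 2)) ^ 2)⁻¹))
      = fun t => (16*c*(2*c*a + 2*c*t)*((1 + c * (s + 2 * a * t + t ^ 2)) + 2))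
          / (1 + c * (s + 2 * a * t + t ^ 2)) ^ 3 := by
    funext t
    rw [(hd1 t).deriv]
    have := hne t
    field_simp
    ring
  have h2 : iteratedDeriv 2 (fun t => -16*c*((1 + c * (s + 2 * a * t + t ^ 2))⁻¹
      + ((1 + c * (s + 2 * a * t + t ^ 2)) ^ 2)⁻¹))
      = deriv (deriv (fun t => -16*c*((1 + c * (s + 2 * a * t + t ^ 2))⁻¹
      + ((1 + c * (s + 2 * a * t + t ^ 2)) ^ 2)⁻¹))) := by
    rw [iteratedDeriv_succ, iteratedDeriv_one]
  rw [h2, hderiv]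
  have hnum : HasDerivAt (fun t : ℝ => (16*c*(2*c*a + 2*c*t))*((1 + c * (s + 2 * a * t + t ^ 2)) + 2))
      ((16*c*(2*c))*((1 + c * (s + 2 * a * 0 + 0 ^ 2)) + 2)
        + (16*c*(2*c*a + 2*c*0))*(2*c*a + 2*c*0)) 0 :=
    ((linDeriv c a 0).const_mul (16*c)).mul ((hQ 0).add_const 2)
  have hden : HasDerivAt (fun t : ℝ => (1 + c * (s + 2 * a * t + t ^ 2)) ^ 3)
      (3 * (1 + c * (s + 2 * a * 0 + 0 ^ 2)) ^ 2 * (2*c*a + 2*c*0)) 0 := by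
    simpa using (hQ 0).fun_pow 3
  have hd2 := hnum.fun_div hden (pow_ne_zero 3 (hne 0))
  have heq : (fun t : ℝ => (16*c*(2*c*a + 2*c*t))*((1 + c * (s + 2 * a * t + t ^ 2)) + 2)
      / (1 + c * (s + 2 * a * t + t ^ 2)) ^ 3)
      = fun t => (16*c*(2*c*a + 2*c*t)*((1 + c * (s + 2 * a * t + t ^ 2)) + 2))
          / (1 + c * (s + 2 * a * t + t ^ 2)) ^ 3 := by
    funext t; ring
  rw [← heq, hd2.deriv]
  have h0 : (0:ℝ) < 1 + c * s := by have := hpos 0; simpa using this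
  simp only [mul_zero, add_zero, ne_eq, OfNat.ofNat_ne_zero, not_false_eq_true, zero_pow]
  field_simp
  ring

lemma normExpand (x : EuclideanSpace ℝ (Fin 4)) (i : Fin 4) (t : ℝ) :
    ‖x + t • EuclideanSpace.single i (1:ℝ)‖ ^ 2 = ‖x‖ ^ 2 + 2 * x i * t + t ^ 2 := by
  rw [norm_add_sq_real]
  congr 1
  · congr 1
    rw [real_inner_smul_right, EuclideanSpace.inner_single_right]
    simp; ring
  · rw [norm_smul, EuclideanSpace.norm_single]
    simp [mul_pow, sq_abs]

lemma normSqSum (x : EuclideanSpace ℝ (Fin 4)) :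
    ‖x‖ ^ 2 = x 0 ^ 2 + x 1 ^ 2 + x 2 ^ 2 + x 3 ^ 2 := by
  rw [← real_inner_self_eq_norm_sq, PiLp.inner_apply]
  simp [Fin.sum_univ_four]

theorem stmt10 (c : ℝ) (hc : c = 1 / (8 * Real.sqrt 6))
    (u : EuclideanSpace ℝ (Fin 4) → ℝ)
    (hu : ∀ x, u x = -4 * Real.log (1 + c * ‖x‖ ^ 2)) :
    ∀ x, lap (lap u) x = Real.exp (u x) := by
  intro x
  have h6 : (0:ℝ) < Real.sqrt 6 := Real.sqrt_pos.2 (by norm_num)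
  have hc0 : 0 < c := by rw [hc]; positivity
  have hc2 : c ^ 2 = 1 / 384 := by
    rw [hc, div_pow, mul_pow, Real.sq_sqrt (by norm_num : (0:ℝ) ≤ 6)]
    norm_num
  have hpos : ∀ (y : EuclideanSpace ℝ (Fin 4)) (i : Fin 4) (t : ℝ),
      0 < 1 + c * (‖y‖ ^ 2 + 2 * y i * t + t ^ 2) := by
    intro y i t
    rw [← normExpand y i t]
    have h := mul_nonneg hc0.le (sq_nonneg ‖y + t • EuclideanSpace.single i (1:ℝ)‖)
    linarith
  have hposn : ∀ y : EuclideanSpace ℝ (Fin 4), (0:ℝ) < 1 + c * ‖y‖ ^ 2 := by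
    intro y
    have h := mul_nonneg hc0.le (sq_nonneg ‖y‖)
    linarith
  have hlapu : ∀ y : EuclideanSpace ℝ (Fin 4), lap u y
      = -16*c*((1 + c * ‖y‖ ^ 2)⁻¹ + ((1 + c * ‖y‖ ^ 2) ^ 2)⁻¹) := by
    intro y
    have h0 := hposn y
    have hterm : ∀ i : Fin 4,
        iteratedDeriv 2 (fun t : ℝ => u (y + t • EuclideanSpace.single i (1:ℝ))) 0
        = (-8*c*(1+c*‖y‖^2) + 16*c^2*(y i)^2) / (1+c*‖y‖^2)^2 := by
      intro i
      have hfun : (fun t : ℝ => u (y + t • EuclideanSpace.single i (1:ℝ)))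
          = fun t => -4 * Real.log (1 + c * (‖y‖ ^ 2 + 2 * y i * t + t ^ 2)) := by
        funext t; rw [hu, normExpand]
      rw [hfun, stepA c (‖y‖^2) (y i) (hpos y i)]
    have hdef : lap u y = ∑ i : Fin 4,
        iteratedDeriv 2 (fun t : ℝ => u (y + t • EuclideanSpace.single i (1:ℝ))) 0 := rfl
    rw [hdef, Fin.sum_univ_four, hterm 0, hterm 1, hterm 2, hterm 3, normSqSum y]
    have h0' : (0:ℝ) < 1 + c * (y 0 ^ 2 + y 1 ^ 2 + y 2 ^ 2 + y 3 ^ 2) := by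
      rw [← normSqSum y]; exact h0
    field_simp
    ring
  have hterm2 : ∀ i : Fin 4,
      iteratedDeriv 2 (fun t : ℝ => lap u (x + t • EuclideanSpace.single i (1:ℝ))) 0
      = (32*c^2*(1+c*‖x‖^2)^2 + 64*c^2*(1+c*‖x‖^2) - 128*c^3*(x i)^2*(1+c*‖x‖^2)
          - 384*c^3*(x i)^2) / (1+c*‖x‖^2)^4 := by
    intro i
    have hfun : (fun t : ℝ => lap u (x + t • EuclideanSpace.single i (1:ℝ)))
        = fun t => -16*c*((1 + c * (‖x‖ ^ 2 + 2 * x i * t + t ^ 2))⁻¹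
            + ((1 + c * (‖x‖ ^ 2 + 2 * x i * t + t ^ 2)) ^ 2)⁻¹) := by
      funext t; rw [hlapu, normExpand]
    rw [hfun, stepB c (‖x‖^2) (x i) (hpos x i)]
  have h0 := hposn x
  have hLHS : lap (lap u) x = 384 * c^2 / (1 + c * ‖x‖ ^ 2) ^ 4 := by
    have hdef : lap (lap u) x = ∑ i : Fin 4,
        iteratedDeriv 2 (fun t : ℝ => lap u (x + t • EuclideanSpace.single i (1:ℝ))) 0 := rfl
    rw [hdef, Fin.sum_univ_four, hterm2 0, hterm2 1, hterm2 2, hterm2 3, normSqSum x]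
    have h0' : (0:ℝ) < 1 + c * (x 0 ^ 2 + x 1 ^ 2 + x 2 ^ 2 + x 3 ^ 2) := by
      rw [← normSqSum x]; exact h0
    field_simp
    ring
  rw [hLHS, hu]
  have hexp : Real.exp (-4 * Real.log (1 + c * ‖x‖ ^ 2)) = ((1 + c * ‖x‖ ^ 2) ^ 4)⁻¹ := by
    rw [show (-4 : ℝ) * Real.log (1 + c * ‖x‖ ^ 2)
        = -((4:ℕ) * Real.log (1 + c * ‖x‖ ^ 2)) by push_cast; ring,
      Real.exp_neg, Real.exp_nat_mul, Real.exp_log h0]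
  rw [hexp, hc2]
  field_simp
end

section
/- There is no C² function v : ℝ² → ℝ such that v(x) < 0 for all x and ∫_{B_r(0)} Δv dx ≥ C for all r ≥ 1, for some constant C > 0. -/
open MeasureTheory Real Set Filter intervalIntegral

noncomputable section

lemma hasDerivAt_glue {F f g : ℝ → ℝ} {c d : ℝ}
    (hf : HasDerivAt f d c) (hg : HasDerivAt g d c)
    (h1 : ∀ᶠ x in nhdsWithin c (Iic c), F x = f x)
    (h2 : ∀ᶠ x in nhdsWithin c (Ici c), F x = g x) : HasDerivAt F d c := by
  have hc1 : F c = f c := h1.self_of_nhdsWithin (mem_Iic.2 le_rfl)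
  have hc2 : F c = g c := h2.self_of_nhdsWithin (mem_Ici.2 le_rfl)
  have hl : HasDerivWithinAt F d (Iic c) c :=
    (hf.hasDerivWithinAt).congr_of_eventuallyEq h1 hc1
  have hr : HasDerivWithinAt F d (Ici c) c :=
    (hg.hasDerivWithinAt).congr_of_eventuallyEq h2 hc2
  have := hl.union hr
  rw [Iic_union_Ici] at this
  exact this.hasDerivAt (by simp)

def pp (s : ℝ) : ℝ := s^3 - s^4/2
def pp' (s : ℝ) : ℝ := 3*s^2 - 2*s^3
def pp'' (s : ℝ) : ℝ := 6*s - 6*s^2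

lemma hasDerivAt_pp (s : ℝ) : HasDerivAt pp (pp' s) s := by
  unfold pp pp'
  have h := ((hasDerivAt_pow 3 s).sub ((hasDerivAt_pow 4 s).div_const 2))
  refine h.congr_deriv ?_
  push_cast; ring

lemma hasDerivAt_pp' (s : ℝ) : HasDerivAt pp' (pp'' s) s := by
  unfold pp' pp''
  have h := (((hasDerivAt_pow 2 s).const_mul 3).sub ((hasDerivAt_pow 3 s).const_mul 2))
  refine h.congr_deriv ?_
  push_cast; ring

lemma pp_zero : pp 0 = 0 := by simp [pp]
lemma pp'_zero : pp' 0 = 0 := by simp [pp']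
lemma pp''_zero : pp'' 0 = 0 := by simp [pp'']
lemma pp_one : pp 1 = 1/2 := by norm_num [pp]
lemma pp'_one : pp' 1 = 1 := by norm_num [pp']
lemma pp''_one : pp'' 1 = 0 := by norm_num [pp'']

lemma pp'_nonneg {s : ℝ} (h0 : 0 ≤ s) (h1 : s ≤ 1) : 0 ≤ pp' s := by
  unfold pp'; nlinarith [sq_nonneg s]
lemma pp''_nonneg {s : ℝ} (h0 : 0 ≤ s) (h1 : s ≤ 1) : 0 ≤ pp'' s := by
  unfold pp''; nlinarith
lemma pp''_le {s : ℝ} (h0 : 0 ≤ s) (h1 : s ≤ 1) : pp'' s ≤ 3/2 := by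
  unfold pp''; nlinarith [sq_nonneg (s - 1/2)]
lemma continuous_pp' : Continuous pp' := by unfold pp'; continuity
lemma continuous_pp'' : Continuous pp'' := by unfold pp''; continuity

def mx (u : ℝ) : ℝ := max 1 u
def lnm (u : ℝ) : ℝ := Real.log (mx u)

lemma mx_pos (u : ℝ) : 0 < mx u := lt_of_lt_of_le one_pos (le_max_left _ _)
lemma mx_eq {u : ℝ} (h : 1 ≤ u) : mx u = u := max_eq_right h
lemma lnm_eq {u : ℝ} (h : 1 ≤ u) : lnm u = Real.log u := by rw [lnm, mx_eq h]
lemma lnm_one : lnm 1 = 0 := by rw [lnm_eq le_rfl, Real.log_one]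
lemma continuous_mx : Continuous mx := continuous_const.max continuous_id
lemma continuous_lnm : Continuous lnm :=
  continuous_mx.log (fun u => (mx_pos u).ne')

/-! ### The piecewise cutoff profile -/

def G2 (S u : ℝ) : ℝ := 1 - (S-1)⁻¹ * pp (Real.log u)
def G3 (S u : ℝ) : ℝ := 1 + (S-1)⁻¹/2 - (S-1)⁻¹ * Real.log u
def G4 (S u : ℝ) : ℝ := (S-1)⁻¹ * pp (S - Real.log u)
def H2 (S u : ℝ) : ℝ := -((S-1)⁻¹ * pp' (Real.log u) / u)
def H3 (S u : ℝ) : ℝ := -((S-1)⁻¹ / u)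
def H4 (S u : ℝ) : ℝ := -((S-1)⁻¹ * pp' (S - Real.log u) / u)
def K2 (S u : ℝ) : ℝ := -((S-1)⁻¹ * (pp'' (Real.log u) - pp' (Real.log u)) / u^2)
def K3 (S u : ℝ) : ℝ := (S-1)⁻¹ / u^2
def K4 (S u : ℝ) : ℝ := (S-1)⁻¹ * (pp'' (S - Real.log u) + pp' (S - Real.log u)) / u^2

def F0 (S u : ℝ) : ℝ :=
  if u ≤ 1 then 1
  else if u ≤ Real.exp 1 then 1 - (S-1)⁻¹ * pp (lnm u)
  else if u ≤ Real.exp (S-1) then 1 + (S-1)⁻¹/2 - (S-1)⁻¹ * lnm u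
  else if u ≤ Real.exp S then (S-1)⁻¹ * pp (S - lnm u)
  else 0

def F1 (S u : ℝ) : ℝ :=
  if u ≤ 1 then 0
  else if u ≤ Real.exp 1 then -((S-1)⁻¹ * pp' (lnm u) / mx u)
  else if u ≤ Real.exp (S-1) then -((S-1)⁻¹ / mx u)
  else if u ≤ Real.exp S then -((S-1)⁻¹ * pp' (S - lnm u) / mx u)
  else 0

def F2 (S u : ℝ) : ℝ :=
  if u ≤ 1 then 0
  else if u ≤ Real.exp 1 then -((S-1)⁻¹ * (pp'' (lnm u) - pp' (lnm u)) / (mx u)^2)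
  else if u ≤ Real.exp (S-1) then (S-1)⁻¹ / (mx u)^2
  else if u ≤ Real.exp S then (S-1)⁻¹ * (pp'' (S - lnm u) + pp' (S - lnm u)) / (mx u)^2
  else 0

variable {S : ℝ} (hS : 3 ≤ S)

section ordering
include hS
lemma ord1 : (1:ℝ) < Real.exp 1 := by
  have := Real.add_one_lt_exp (x := 1) one_ne_zero; linarith
lemma ord2 : Real.exp 1 < Real.exp (S-1) := Real.exp_lt_exp.2 (by linarith)
lemma ord3 : Real.exp (S-1) < Real.exp S := Real.exp_lt_exp.2 (by linarith)
lemma ordS : (0:ℝ) < (S-1)⁻¹ := inv_pos.2 (by linarith)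
end ordering

/-! ### branch identification -/

section eqs
include hS

lemma F0_eq1 {u : ℝ} (h : u ≤ 1) : F0 S u = 1 := if_pos h
lemma F0_eq2 {u : ℝ} (h1 : 1 ≤ u) (h2 : u ≤ Real.exp 1) : F0 S u = G2 S u := by
  rcases eq_or_lt_of_le h1 with h|h
  · rw [F0, if_pos h.symm.le, G2, ← h, Real.log_one, pp_zero]; ring
  · rw [F0, if_neg (not_le.2 h), if_pos h2, G2, lnm_eq h1]
lemma F0_eq3 {u : ℝ} (h1 : Real.exp 1 ≤ u) (h2 : u ≤ Real.exp (S-1)) : F0 S u = G3 S u := by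
  have hu1 : (1:ℝ) ≤ u := le_trans (ord1 hS).le h1
  rcases eq_or_lt_of_le h1 with h|h
  · rw [F0, if_neg (not_le.2 (lt_of_lt_of_le (ord1 hS) h1)), if_pos h.symm.le, G3, lnm_eq hu1,
      ← h, Real.log_exp, pp_one]
    ring
  · rw [F0, if_neg (not_le.2 (lt_of_lt_of_le (ord1 hS) h1)), if_neg (not_le.2 h), if_pos h2,
      G3, lnm_eq hu1]
lemma F0_eq4 {u : ℝ} (h1 : Real.exp (S-1) ≤ u) (h2 : u ≤ Real.exp S) : F0 S u = G4 S u := by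
  have hu1 : (1:ℝ) ≤ u := le_trans ((ord1 hS).trans (ord2 hS)).le h1
  have hne : ¬ u ≤ Real.exp 1 := not_le.2 (lt_of_lt_of_le (ord2 hS) h1)
  have hne1 : ¬ u ≤ (1:ℝ) := not_le.2 (lt_of_lt_of_le ((ord1 hS).trans (ord2 hS)) h1)
  rcases eq_or_lt_of_le h1 with h|h
  · rw [F0, if_neg hne1, if_neg hne, if_pos h.symm.le, lnm_eq hu1, G4, ← h, Real.log_exp]
    have h' : S - (S-1) = 1 := by ring
    rw [h', pp_one]
    have hS1 : S - 1 ≠ 0 := by linarith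
    field_simp
    ring
  · rw [F0, if_neg hne1, if_neg hne, if_neg (not_le.2 h), if_pos h2, G4, lnm_eq hu1]
lemma F0_eq5 {u : ℝ} (h : Real.exp S ≤ u) : F0 S u = 0 := by
  have h1 := ord1 hS; have h2 := ord2 hS; have h3 := ord3 hS
  rcases eq_or_lt_of_le h with h'|h'
  · rw [F0, if_neg (by push_neg; linarith), if_neg (by push_neg; linarith),
      if_neg (by push_neg; linarith), if_pos h'.symm.le, lnm_eq (by linarith), ← h',
      Real.log_exp]
    simp [pp_zero]
  · rw [F0, if_neg (by push_neg; linarith), if_neg (by push_neg; linarith),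
      if_neg (by push_neg; linarith), if_neg (not_le.2 h')]

lemma F1_eq1 {u : ℝ} (h : u ≤ 1) : F1 S u = 0 := if_pos h
lemma F1_eq2 {u : ℝ} (h1 : 1 ≤ u) (h2 : u ≤ Real.exp 1) : F1 S u = H2 S u := by
  rcases eq_or_lt_of_le h1 with h|h
  · rw [F1, if_pos h.symm.le, H2, ← h, Real.log_one, pp'_zero]; simp
  · rw [F1, if_neg (not_le.2 h), if_pos h2, H2, lnm_eq h1, mx_eq h1]
lemma F1_eq3 {u : ℝ} (h1 : Real.exp 1 ≤ u) (h2 : u ≤ Real.exp (S-1)) : F1 S u = H3 S u := by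
  have hu1 : (1:ℝ) ≤ u := le_trans (ord1 hS).le h1
  rcases eq_or_lt_of_le h1 with h|h
  · rw [F1, if_neg (not_le.2 (lt_of_lt_of_le (ord1 hS) h1)), if_pos h.symm.le, H3, lnm_eq hu1,
      mx_eq hu1, ← h, Real.log_exp, pp'_one, mul_one]
  · rw [F1, if_neg (not_le.2 (lt_of_lt_of_le (ord1 hS) h1)), if_neg (not_le.2 h), if_pos h2,
      H3, mx_eq hu1]
lemma F1_eq4 {u : ℝ} (h1 : Real.exp (S-1) ≤ u) (h2 : u ≤ Real.exp S) : F1 S u = H4 S u := by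
  have hu1 : (1:ℝ) ≤ u := le_trans ((ord1 hS).trans (ord2 hS)).le h1
  have hne : ¬ u ≤ Real.exp 1 := not_le.2 (lt_of_lt_of_le (ord2 hS) h1)
  have hne1 : ¬ u ≤ (1:ℝ) := not_le.2 (lt_of_lt_of_le ((ord1 hS).trans (ord2 hS)) h1)
  rcases eq_or_lt_of_le h1 with h|h
  · rw [F1, if_neg hne1, if_neg hne, if_pos h.symm.le, mx_eq hu1, H4, ← h,
      Real.log_exp]
    have h' : S - (S-1) = 1 := by ring
    rw [h', pp'_one, mul_one]
  · rw [F1, if_neg hne1, if_neg hne, if_neg (not_le.2 h), if_pos h2, H4, lnm_eq hu1, mx_eq hu1]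
lemma F1_eq5 {u : ℝ} (h : Real.exp S ≤ u) : F1 S u = 0 := by
  have h1 := ord1 hS; have h2 := ord2 hS; have h3 := ord3 hS
  rcases eq_or_lt_of_le h with h'|h'
  · rw [F1, if_neg (by push_neg; linarith), if_neg (by push_neg; linarith),
      if_neg (by push_neg; linarith), if_pos h'.symm.le, lnm_eq (by linarith), ← h',
      Real.log_exp]
    simp [pp'_zero]
  · rw [F1, if_neg (by push_neg; linarith), if_neg (by push_neg; linarith),
      if_neg (by push_neg; linarith), if_neg (not_le.2 h')]

lemma F2_eq1 {u : ℝ} (h : u ≤ 1) : F2 S u = 0 := if_pos h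
lemma F2_eq2 {u : ℝ} (h1 : 1 ≤ u) (h2 : u ≤ Real.exp 1) : F2 S u = K2 S u := by
  rcases eq_or_lt_of_le h1 with h|h
  · rw [F2, if_pos h.symm.le, K2, ← h, Real.log_one, pp'_zero, pp''_zero]; simp
  · rw [F2, if_neg (not_le.2 h), if_pos h2, K2, lnm_eq h1, mx_eq h1]
lemma F2_eq3 {u : ℝ} (h1 : Real.exp 1 ≤ u) (h2 : u ≤ Real.exp (S-1)) : F2 S u = K3 S u := by
  have hu1 : (1:ℝ) ≤ u := le_trans (ord1 hS).le h1
  rcases eq_or_lt_of_le h1 with h|h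
  · rw [F2, if_neg (not_le.2 (lt_of_lt_of_le (ord1 hS) h1)), if_pos h.symm.le, K3, lnm_eq hu1,
      mx_eq hu1, ← h, Real.log_exp, pp'_one, pp''_one]
    ring
  · rw [F2, if_neg (not_le.2 (lt_of_lt_of_le (ord1 hS) h1)), if_neg (not_le.2 h), if_pos h2,
      K3, mx_eq hu1]
lemma F2_eq4 {u : ℝ} (h1 : Real.exp (S-1) ≤ u) (h2 : u ≤ Real.exp S) : F2 S u = K4 S u := by
  have hu1 : (1:ℝ) ≤ u := le_trans ((ord1 hS).trans (ord2 hS)).le h1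
  have hne : ¬ u ≤ Real.exp 1 := not_le.2 (lt_of_lt_of_le (ord2 hS) h1)
  have hne1 : ¬ u ≤ (1:ℝ) := not_le.2 (lt_of_lt_of_le ((ord1 hS).trans (ord2 hS)) h1)
  rcases eq_or_lt_of_le h1 with h|h
  · rw [F2, if_neg hne1, if_neg hne, if_pos h.symm.le, mx_eq hu1, K4, ← h,
      Real.log_exp]
    have h' : S - (S-1) = 1 := by ring
    rw [h', pp'_one, pp''_one]
    ring
  · rw [F2, if_neg hne1, if_neg hne, if_neg (not_le.2 h), if_pos h2, K4, lnm_eq hu1, mx_eq hu1]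
lemma F2_eq5 {u : ℝ} (h : Real.exp S ≤ u) : F2 S u = 0 := by
  have h1 := ord1 hS; have h2 := ord2 hS; have h3 := ord3 hS
  rcases eq_or_lt_of_le h with h'|h'
  · rw [F2, if_neg (by push_neg; linarith), if_neg (by push_neg; linarith),
      if_neg (by push_neg; linarith), if_pos h'.symm.le, lnm_eq (by linarith), ← h',
      Real.log_exp]
    simp [pp'_zero, pp''_zero]
  · rw [F2, if_neg (by push_neg; linarith), if_neg (by push_neg; linarith),
      if_neg (by push_neg; linarith), if_neg (not_le.2 h')]

end eqs
end

noncomputable section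
variable {S : ℝ} (hS : 3 ≤ S)

/-! ### derivatives of the models -/

lemma hG2d {u : ℝ} (hu : 0 < u) : HasDerivAt (G2 S) (H2 S u) u := by
  have h1 : HasDerivAt (fun x : ℝ => pp (Real.log x)) (pp' (Real.log u) * u⁻¹) u :=
    (hasDerivAt_pp _).comp u (Real.hasDerivAt_log hu.ne')
  have h2 := (h1.const_mul ((S-1)⁻¹)).const_sub 1
  refine h2.congr_deriv ?_
  rw [H2]; ring

lemma hG3d {u : ℝ} (hu : 0 < u) : HasDerivAt (G3 S) (H3 S u) u := by
  have h2 := ((Real.hasDerivAt_log hu.ne').const_mul ((S-1)⁻¹)).const_sub (1 + (S-1)⁻¹/2)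
  exact h2.congr_deriv (by rw [H3]; ring)

lemma hG4d {u : ℝ} (hu : 0 < u) : HasDerivAt (G4 S) (H4 S u) u := by
  have h0 : HasDerivAt (fun x : ℝ => S - Real.log x) (-u⁻¹) u :=
    (Real.hasDerivAt_log hu.ne').const_sub S
  have h1 : HasDerivAt (fun x : ℝ => pp (S - Real.log x)) (pp' (S - Real.log u) * -u⁻¹) u :=
    (hasDerivAt_pp _).comp u h0
  have h2 := h1.const_mul ((S-1)⁻¹)
  refine h2.congr_deriv ?_
  rw [H4]; ring

lemma hH2d {u : ℝ} (hu : 0 < u) : HasDerivAt (H2 S) (K2 S u) u := by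
  have h1 : HasDerivAt (fun x : ℝ => pp' (Real.log x)) (pp'' (Real.log u) * u⁻¹) u :=
    (hasDerivAt_pp' _).comp u (Real.hasDerivAt_log hu.ne')
  have h2 : HasDerivAt (fun x : ℝ => x⁻¹) (-(u^2)⁻¹) u := hasDerivAt_inv hu.ne'
  have h3 := ((h1.const_mul ((S-1)⁻¹)).mul h2).neg
  refine h3.congr_deriv ?_
  rw [K2]; field_simp; ring

lemma hH3d {u : ℝ} (hu : 0 < u) : HasDerivAt (H3 S) (K3 S u) u := by
  have h2 : HasDerivAt (fun x : ℝ => x⁻¹) (-(u^2)⁻¹) u := hasDerivAt_inv hu.ne'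
  have h3 := (h2.const_mul ((S-1)⁻¹)).neg
  have h4 : HasDerivAt (H3 S) (-((S - 1)⁻¹ * -(u ^ 2)⁻¹)) u := by
    refine h3.congr_of_eventuallyEq ?_
    filter_upwards with x
    simp only [H3, Pi.neg_apply]; ring
  convert h4 using 1
  rw [K3]; field_simp

lemma hH4d {u : ℝ} (hu : 0 < u) : HasDerivAt (H4 S) (K4 S u) u := by
  have h0 : HasDerivAt (fun x : ℝ => S - Real.log x) (-u⁻¹) u :=
    (Real.hasDerivAt_log hu.ne').const_sub S
  have h1 : HasDerivAt (fun x : ℝ => pp' (S - Real.log x)) (pp'' (S - Real.log u) * -u⁻¹) u :=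
    (hasDerivAt_pp' _).comp u h0
  have h2 : HasDerivAt (fun x : ℝ => x⁻¹) (-(u^2)⁻¹) u := hasDerivAt_inv hu.ne'
  have h3 := ((h1.const_mul ((S-1)⁻¹)).mul h2).neg
  refine h3.congr_deriv ?_
  rw [K4]; field_simp; ring

/-! ### gluing -/

include hS

lemma fd1 : ∀ u, HasDerivAt (F0 S) (F1 S u) u := by
  have e1 := ord1 hS; have e2 := ord2 hS; have e3 := ord3 hS
  have ep1 := Real.exp_pos 1; have epS1 := Real.exp_pos (S-1); have epS := Real.exp_pos S
  intro u
  rcases lt_trichotomy u 1 with h|h|h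
  · rw [F1_eq1 hS h.le]
    refine (hasDerivAt_const u 1).congr_of_eventuallyEq ?_
    filter_upwards [eventually_lt_nhds h] with x hx using F0_eq1 hS hx.le
  · subst h
    rw [F1_eq1 hS le_rfl]
    refine hasDerivAt_glue (f := fun _ => (1:ℝ)) (g := G2 S) (hasDerivAt_const _ _) ?_ ?_ ?_
    · simpa [H2, Real.log_one, pp'_zero] using hG2d (S := S) one_pos
    · exact eventually_nhdsWithin_of_forall (fun x hx => F0_eq1 hS hx)
    · filter_upwards [eventually_nhdsWithin_of_eventually_nhds (eventually_lt_nhds e1),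
        eventually_mem_nhdsWithin] with x h1 h2
      exact F0_eq2 hS h2 h1.le
  rcases lt_trichotomy u (Real.exp 1) with h'|h'|h'
  · rw [F1_eq2 hS h.le h'.le]
    refine (hG2d (by linarith)).congr_of_eventuallyEq ?_
    filter_upwards [eventually_lt_nhds h', eventually_gt_nhds h] with x hx1 hx2
    exact F0_eq2 hS hx2.le hx1.le
  · subst h'
    rw [F1_eq2 hS h.le le_rfl]
    have hv : H2 S (Real.exp 1) = H3 S (Real.exp 1) := by
      rw [H2, H3, Real.log_exp, pp'_one, mul_one]
    refine hasDerivAt_glue (f := G2 S) (g := G3 S) (hG2d ep1) ?_ ?_ ?_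
    · rw [hv]; exact hG3d ep1
    · filter_upwards [eventually_nhdsWithin_of_eventually_nhds (eventually_gt_nhds e1),
        eventually_mem_nhdsWithin] with x h1 h2
      exact F0_eq2 hS h1.le h2
    · filter_upwards [eventually_nhdsWithin_of_eventually_nhds (eventually_lt_nhds e2),
        eventually_mem_nhdsWithin] with x h1 h2
      exact F0_eq3 hS h2 h1.le
  rcases lt_trichotomy u (Real.exp (S-1)) with h''|h''|h''
  · rw [F1_eq3 hS h'.le h''.le]
    refine (hG3d (by linarith)).congr_of_eventuallyEq ?_
    filter_upwards [eventually_lt_nhds h'', eventually_gt_nhds h'] with x hx1 hx2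
    exact F0_eq3 hS hx2.le hx1.le
  · subst h''
    rw [F1_eq3 hS h'.le le_rfl]
    have hv : H4 S (Real.exp (S-1)) = H3 S (Real.exp (S-1)) := by
      rw [H4, H3, Real.log_exp, show S - (S-1) = 1 by ring, pp'_one, mul_one]
    refine hasDerivAt_glue (f := G3 S) (g := G4 S) (hG3d epS1) ?_ ?_ ?_
    · rw [← hv]; exact hG4d epS1
    · filter_upwards [eventually_nhdsWithin_of_eventually_nhds (eventually_gt_nhds e2),
        eventually_mem_nhdsWithin] with x h1 h2
      exact F0_eq3 hS h1.le h2
    · filter_upwards [eventually_nhdsWithin_of_eventually_nhds (eventually_lt_nhds e3),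
        eventually_mem_nhdsWithin] with x h1 h2
      exact F0_eq4 hS h2 h1.le
  rcases lt_trichotomy u (Real.exp S) with h3|h3|h3
  · rw [F1_eq4 hS h''.le h3.le]
    refine (hG4d (by linarith)).congr_of_eventuallyEq ?_
    filter_upwards [eventually_lt_nhds h3, eventually_gt_nhds h''] with x hx1 hx2
    exact F0_eq4 hS hx2.le hx1.le
  · subst h3
    rw [F1_eq5 hS le_rfl]
    have hv : H4 S (Real.exp S) = 0 := by
      rw [H4, Real.log_exp, sub_self, pp'_zero]; simp
    refine hasDerivAt_glue (f := G4 S) (g := fun _ => (0:ℝ)) ?_ (hasDerivAt_const _ _) ?_ ?_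
    · rw [← hv]; exact hG4d epS
    · filter_upwards [eventually_nhdsWithin_of_eventually_nhds (eventually_gt_nhds e3),
        eventually_mem_nhdsWithin] with x h1 h2
      exact F0_eq4 hS h1.le h2
    · exact eventually_nhdsWithin_of_forall (fun x hx => F0_eq5 hS hx)
  · rw [F1_eq5 hS h3.le]
    refine (hasDerivAt_const u 0).congr_of_eventuallyEq ?_
    filter_upwards [eventually_gt_nhds h3] with x hx using F0_eq5 hS hx.le

lemma fd2 : ∀ u, HasDerivAt (F1 S) (F2 S u) u := by
  have e1 := ord1 hS; have e2 := ord2 hS; have e3 := ord3 hS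
  have ep1 := Real.exp_pos 1; have epS1 := Real.exp_pos (S-1); have epS := Real.exp_pos S
  intro u
  rcases lt_trichotomy u 1 with h|h|h
  · rw [F2_eq1 hS h.le]
    refine (hasDerivAt_const u 0).congr_of_eventuallyEq ?_
    filter_upwards [eventually_lt_nhds h] with x hx using F1_eq1 hS hx.le
  · subst h
    rw [F2_eq1 hS le_rfl]
    have hv : K2 S 1 = 0 := by
      rw [K2, Real.log_one, pp'_zero, pp''_zero]; simp
    refine hasDerivAt_glue (f := fun _ => (0:ℝ)) (g := H2 S) (hasDerivAt_const _ _) ?_ ?_ ?_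
    · rw [← hv]; exact hH2d one_pos
    · exact eventually_nhdsWithin_of_forall (fun x hx => F1_eq1 hS hx)
    · filter_upwards [eventually_nhdsWithin_of_eventually_nhds (eventually_lt_nhds e1),
        eventually_mem_nhdsWithin] with x h1 h2
      exact F1_eq2 hS h2 h1.le
  rcases lt_trichotomy u (Real.exp 1) with h'|h'|h'
  · rw [F2_eq2 hS h.le h'.le]
    refine (hH2d (by linarith)).congr_of_eventuallyEq ?_
    filter_upwards [eventually_lt_nhds h', eventually_gt_nhds h] with x hx1 hx2
    exact F1_eq2 hS hx2.le hx1.le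
  · subst h'
    rw [F2_eq2 hS h.le le_rfl]
    have hv : K2 S (Real.exp 1) = K3 S (Real.exp 1) := by
      rw [K2, K3, Real.log_exp, pp'_one, pp''_one]; ring
    refine hasDerivAt_glue (f := H2 S) (g := H3 S) (hH2d ep1) ?_ ?_ ?_
    · rw [hv]; exact hH3d ep1
    · filter_upwards [eventually_nhdsWithin_of_eventually_nhds (eventually_gt_nhds e1),
        eventually_mem_nhdsWithin] with x h1 h2
      exact F1_eq2 hS h1.le h2
    · filter_upwards [eventually_nhdsWithin_of_eventually_nhds (eventually_lt_nhds e2),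
        eventually_mem_nhdsWithin] with x h1 h2
      exact F1_eq3 hS h2 h1.le
  rcases lt_trichotomy u (Real.exp (S-1)) with h''|h''|h''
  · rw [F2_eq3 hS h'.le h''.le]
    refine (hH3d (by linarith)).congr_of_eventuallyEq ?_
    filter_upwards [eventually_lt_nhds h'', eventually_gt_nhds h'] with x hx1 hx2
    exact F1_eq3 hS hx2.le hx1.le
  · subst h''
    rw [F2_eq3 hS h'.le le_rfl]
    have hv : K4 S (Real.exp (S-1)) = K3 S (Real.exp (S-1)) := by
      rw [K4, K3, Real.log_exp, show S - (S-1) = 1 by ring, pp'_one, pp''_one]; ring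
    refine hasDerivAt_glue (f := H3 S) (g := H4 S) (hH3d epS1) ?_ ?_ ?_
    · rw [← hv]; exact hH4d epS1
    · filter_upwards [eventually_nhdsWithin_of_eventually_nhds (eventually_gt_nhds e2),
        eventually_mem_nhdsWithin] with x h1 h2
      exact F1_eq3 hS h1.le h2
    · filter_upwards [eventually_nhdsWithin_of_eventually_nhds (eventually_lt_nhds e3),
        eventually_mem_nhdsWithin] with x h1 h2
      exact F1_eq4 hS h2 h1.le
  rcases lt_trichotomy u (Real.exp S) with h3|h3|h3
  · rw [F2_eq4 hS h''.le h3.le]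
    refine (hH4d (by linarith)).congr_of_eventuallyEq ?_
    filter_upwards [eventually_lt_nhds h3, eventually_gt_nhds h''] with x hx1 hx2
    exact F1_eq4 hS hx2.le hx1.le
  · subst h3
    rw [F2_eq5 hS le_rfl]
    have hv : K4 S (Real.exp S) = 0 := by
      rw [K4, Real.log_exp, sub_self, pp'_zero, pp''_zero]; simp
    refine hasDerivAt_glue (f := H4 S) (g := fun _ => (0:ℝ)) ?_ (hasDerivAt_const _ _) ?_ ?_
    · rw [← hv]; exact hH4d epS
    · filter_upwards [eventually_nhdsWithin_of_eventually_nhds (eventually_gt_nhds e3),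
        eventually_mem_nhdsWithin] with x h1 h2
      exact F1_eq4 hS h1.le h2
    · exact eventually_nhdsWithin_of_forall (fun x hx => F1_eq5 hS hx)
  · rw [F2_eq5 hS h3.le]
    refine (hasDerivAt_const u 0).congr_of_eventuallyEq ?_
    filter_upwards [eventually_gt_nhds h3] with x hx using F1_eq5 hS hx.le

lemma contF0 : Continuous (F0 S) := by
  have : Differentiable ℝ (F0 S) := fun u => (fd1 hS u).differentiableAt
  exact this.continuous

lemma contF1 : Continuous (F1 S) := by
  have : Differentiable ℝ (F1 S) := fun u => (fd2 hS u).differentiableAt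
  exact this.continuous

end

noncomputable section
variable {S : ℝ} (hS : 3 ≤ S)
include hS

lemma fc2 : Continuous (F2 S) := by
  have e1 := ord1 hS; have e2 := ord2 hS; have e3 := ord3 hS
  have hmx : ∀ u : ℝ, (mx u)^2 ≠ 0 := fun u => pow_ne_zero 2 (mx_pos u).ne'
  have c2 : Continuous (fun u => -((S-1)⁻¹ * (pp'' (lnm u) - pp' (lnm u)) / (mx u)^2)) := by
    exact (((continuous_const.mul ((continuous_pp''.comp continuous_lnm).sub
      (continuous_pp'.comp continuous_lnm))).div (continuous_mx.pow 2) hmx)).neg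
  have c3 : Continuous (fun u : ℝ => (S-1)⁻¹ / (mx u)^2) :=
    continuous_const.div (continuous_mx.pow 2) hmx
  have c4 : Continuous (fun u => (S-1)⁻¹ * (pp'' (S - lnm u) + pp' (S - lnm u)) / (mx u)^2) := by
    exact ((continuous_const.mul ((continuous_pp''.comp (continuous_const.sub continuous_lnm)).add
      (continuous_pp'.comp (continuous_const.sub continuous_lnm)))).div (continuous_mx.pow 2) hmx)
  unfold F2
  refine Continuous.if_le ?_ ?_ continuous_id continuous_const ?_
  · exact continuous_const
  · refine Continuous.if_le c2 ?_ continuous_id continuous_const ?_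
    · refine Continuous.if_le c3 ?_ continuous_id continuous_const ?_
      · refine Continuous.if_le c4 continuous_const continuous_id continuous_const ?_
        · intro x hx
          rw [hx, lnm_eq (by linarith [Real.exp_pos S] : (1:ℝ) ≤ Real.exp S), Real.log_exp,
            sub_self, pp'_zero, pp''_zero]
          simp
      · intro x hx
        rw [hx, if_pos e3.le, lnm_eq (by linarith : (1:ℝ) ≤ Real.exp (S-1)), Real.log_exp,
          mx_eq (by linarith : (1:ℝ) ≤ Real.exp (S-1)), show S - (S-1) = 1 by ring,
          pp'_one, pp''_one]
        ring
    · intro x hx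
      rw [hx, if_pos e2.le, lnm_eq e1.le, Real.log_exp, mx_eq e1.le, pp'_one, pp''_one]
      ring
  · intro x hx
    rw [hx, if_pos e1.le, lnm_one, pp'_zero, pp''_zero]
    simp

lemma F1_nonpos : ∀ u, F1 S u ≤ 0 := by
  intro u
  have hA := (ordS hS).le
  unfold F1
  split_ifs with h1 h2 h3 h4
  · exact le_rfl
  · have h0 : 0 ≤ lnm u := Real.log_nonneg (le_max_left _ _)
    have hl1 : lnm u ≤ 1 := by
      rw [lnm_eq (by linarith : (1:ℝ) ≤ u)]
      exact (Real.log_le_iff_le_exp (by linarith [ord1 hS])).2 h2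
    have := pp'_nonneg h0 hl1
    have hmu := (mx_pos u).le
    rw [neg_nonpos]
    positivity
  · have hmu := (mx_pos u).le
    rw [neg_nonpos]
    positivity
  · have h0 : 0 ≤ S - lnm u := by
      rw [lnm_eq (by linarith [ord1 hS, ord2 hS] : (1:ℝ) ≤ u)]
      have := (Real.log_le_iff_le_exp (by linarith [Real.exp_pos 1, ord1 hS, ord2 hS] : (0:ℝ) < u)).2 h4
      linarith
    have hl1 : S - lnm u ≤ 1 := by
      rw [lnm_eq (by linarith [ord1 hS, ord2 hS] : (1:ℝ) ≤ u)]
      have : S - 1 ≤ Real.log u := by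
        rw [← Real.log_exp (S-1)]
        exact Real.log_le_log (Real.exp_pos _) (by linarith)
      linarith
    have := pp'_nonneg h0 hl1
    have hmu := (mx_pos u).le
    rw [neg_nonpos]
    positivity
  · exact le_rfl

end

noncomputable section
variable {S : ℝ} (hS : 3 ≤ S)
include hS

lemma log_mem_01 {u : ℝ} (h1 : 1 ≤ u) (h2 : u ≤ Real.exp 1) :
    0 ≤ Real.log u ∧ Real.log u ≤ 1 := by
  constructor
  · exact Real.log_nonneg h1
  · rw [← Real.log_exp 1]
    exact Real.log_le_log (by linarith) h2

lemma slog_mem_01 {u : ℝ} (h1 : Real.exp (S-1) ≤ u) (h2 : u ≤ Real.exp S) :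
    0 ≤ S - Real.log u ∧ S - Real.log u ≤ 1 := by
  have hu : (0:ℝ) < u := lt_of_lt_of_le (Real.exp_pos _) h1
  constructor
  · have : Real.log u ≤ S := by
      rw [← Real.log_exp S]
      exact Real.log_le_log hu h2
    linarith
  · have : S - 1 ≤ Real.log u := by
      rw [← Real.log_exp (S-1)]
      exact Real.log_le_log (Real.exp_pos _) h1
    linarith

lemma dlt_nonneg {u : ℝ} (hu : Real.exp 1 ≤ u) : 0 ≤ u * F2 S u + F1 S u := by
  have hu0 : (0:ℝ) < u := lt_of_lt_of_le (Real.exp_pos 1) hu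
  have hS1 : S - 1 ≠ 0 := by linarith
  have hune : u ≠ 0 := hu0.ne'
  rcases le_or_gt u (Real.exp (S-1)) with h|h
  · rw [F2_eq3 hS hu h, F1_eq3 hS hu h, K3, H3]
    have : u * ((S-1)⁻¹ / u^2) + -((S-1)⁻¹/u) = 0 := by field_simp; ring
    rw [this]
  rcases le_or_gt u (Real.exp S) with h2|h2
  · rw [F2_eq4 hS h.le h2, F1_eq4 hS h.le h2, K4, H4]
    obtain ⟨hs0, hs1⟩ := slog_mem_01 hS h.le h2
    have hval : u * ((S-1)⁻¹ * (pp'' (S - Real.log u) + pp' (S - Real.log u)) / u^2)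
        + -((S-1)⁻¹ * pp' (S - Real.log u) / u) = (S-1)⁻¹ * pp'' (S - Real.log u) / u := by
      field_simp
      ring
    rw [hval]
    have := pp''_nonneg hs0 hs1
    have hA := (ordS hS).le
    positivity
  · rw [F2_eq5 hS h2.le, F1_eq5 hS h2.le]
    simp

lemma dlt_eq_low {u : ℝ} (h1 : 1 < u) (hu : u ≤ Real.exp 1) :
    u * F2 S u + F1 S u = -((S-1)⁻¹ * pp'' (Real.log u) / u) := by
  have hu0 : (0:ℝ) < u := by linarith
  have hS1 : S - 1 ≠ 0 := by linarith
  have hune : u ≠ 0 := hu0.ne'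
  rw [F2_eq2 hS h1.le hu, F1_eq2 hS h1.le hu, K2, H2]
  field_simp
  ring

lemma dlt_nonpos {u : ℝ} (hu : u ≤ Real.exp 1) : u * F2 S u + F1 S u ≤ 0 := by
  rcases le_or_gt u 1 with h|h
  · rw [F2_eq1 hS h, F1_eq1 hS h]; simp
  · rw [dlt_eq_low hS h hu]
    obtain ⟨hs0, hs1⟩ := log_mem_01 hS h.le hu
    have := pp''_nonneg hs0 hs1
    have hA := (ordS hS).le
    have : 0 ≤ (S-1)⁻¹ * pp'' (Real.log u) / u := by positivity
    linarith

lemma dlt_lb {u : ℝ} (hu : u ≤ Real.exp 1) :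
    -((3/2) * (S-1)⁻¹) ≤ u * F2 S u + F1 S u := by
  have hA := (ordS hS).le
  rcases le_or_gt u 1 with h|h
  · rw [F2_eq1 hS h, F1_eq1 hS h]
    simp only [mul_zero, add_zero]
    have : (0:ℝ) ≤ 3/2*(S-1)⁻¹ := by positivity
    linarith
  · rw [dlt_eq_low hS h hu]
    obtain ⟨hs0, hs1⟩ := log_mem_01 hS h.le hu
    have h32 := pp''_le hs0 hs1
    have h0 := pp''_nonneg hs0 hs1
    rw [neg_le_neg_iff]
    calc (S-1)⁻¹ * pp'' (Real.log u) / u ≤ (S-1)⁻¹ * pp'' (Real.log u) :=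
          div_le_self (by positivity) (by linarith)
      _ ≤ (S-1)⁻¹ * (3/2) := by
          exact mul_le_mul_of_nonneg_left h32 hA
      _ = (3/2) * (S-1)⁻¹ := by ring

lemma F0_one : F0 S 1 = 1 := F0_eq1 hS le_rfl
end

noncomputable section

def P1 (F : ℝ×ℝ → ℝ) (p : ℝ×ℝ) : ℝ := fderiv ℝ F p (1,0)
def P2 (F : ℝ×ℝ → ℝ) (p : ℝ×ℝ) : ℝ := fderiv ℝ F p (0,1)

lemma hasDerivAt_slice1 {F : ℝ×ℝ → ℝ} (hF : Differentiable ℝ F) (a b : ℝ) :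
    HasDerivAt (fun s => F (s, b)) (P1 F (a,b)) a := by
  have h1 : HasFDerivAt (fun s : ℝ => (s, b))
      ((ContinuousLinearMap.id ℝ ℝ).prod (0 : ℝ →L[ℝ] ℝ)) a :=
    (hasFDerivAt_id a).prodMk (hasFDerivAt_const b a)
  have h2 := ((hF (a,b)).hasFDerivAt.comp a h1)
  have h3 := h2.hasDerivAt
  simpa [P1, Function.comp_def] using h3

lemma hasDerivAt_slice2 {F : ℝ×ℝ → ℝ} (hF : Differentiable ℝ F) (a b : ℝ) :
    HasDerivAt (fun t => F (a, t)) (P2 F (a,b)) b := by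
  have h1 : HasFDerivAt (fun t : ℝ => (a, t))
      ((0 : ℝ →L[ℝ] ℝ).prod (ContinuousLinearMap.id ℝ ℝ)) b :=
    (hasFDerivAt_const a b).prodMk (hasFDerivAt_id b)
  have h2 := ((hF (a,b)).hasFDerivAt.comp b h1)
  have h3 := h2.hasDerivAt
  simpa [P2, Function.comp_def] using h3

lemma contDiff_P1 {F : ℝ×ℝ → ℝ} (hF : ContDiff ℝ 2 F) : ContDiff ℝ 1 (P1 F) :=
  (hF.fderiv_right (by norm_num)).clm_apply contDiff_const

lemma contDiff_P2 {F : ℝ×ℝ → ℝ} (hF : ContDiff ℝ 2 F) : ContDiff ℝ 1 (P2 F) :=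
  (hF.fderiv_right (by norm_num)).clm_apply contDiff_const

lemma continuous_P1 {F : ℝ×ℝ → ℝ} (hF : ContDiff ℝ 1 F) : Continuous (P1 F) :=
  (((hF.fderiv_right (m := 0) (by norm_num)).clm_apply contDiff_const)).continuous

lemma continuous_P2 {F : ℝ×ℝ → ℝ} (hF : ContDiff ℝ 1 F) : Continuous (P2 F) :=
  (((hF.fderiv_right (m := 0) (by norm_num)).clm_apply contDiff_const)).continuous

lemma iteratedDeriv_slice1 {F : ℝ×ℝ → ℝ} (hF : ContDiff ℝ 2 F) (a b : ℝ) :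
    iteratedDeriv 2 (fun s => F (s,b)) a = P1 (P1 F) (a,b) := by
  have hFd : Differentiable ℝ F := hF.differentiable two_ne_zero
  have hP1d : Differentiable ℝ (P1 F) := (contDiff_P1 hF).differentiable one_ne_zero
  have h1 : deriv (fun s => F (s,b)) = fun s => P1 F (s,b) :=
    funext fun s => (hasDerivAt_slice1 hFd s b).deriv
  rw [iteratedDeriv_succ, iteratedDeriv_one, h1]
  exact (hasDerivAt_slice1 hP1d a b).deriv

lemma iteratedDeriv_slice2 {F : ℝ×ℝ → ℝ} (hF : ContDiff ℝ 2 F) (a b : ℝ) :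
    iteratedDeriv 2 (fun t => F (a,t)) b = P2 (P2 F) (a,b) := by
  have hFd : Differentiable ℝ F := hF.differentiable two_ne_zero
  have hP2d : Differentiable ℝ (P2 F) := (contDiff_P2 hF).differentiable one_ne_zero
  have h1 : deriv (fun t => F (a,t)) = fun t => P2 F (a,t) :=
    funext fun t => (hasDerivAt_slice2 hFd a t).deriv
  rw [iteratedDeriv_succ, iteratedDeriv_one, h1]
  exact (hasDerivAt_slice2 hP2d a b).deriv

/-! ### the identification of ℝ² with the Euclidean plane -/

def ψm (p : ℝ × ℝ) : EuclideanSpace ℝ (Fin 2) :=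
  p.1 • EuclideanSpace.single 0 (1:ℝ) + p.2 • EuclideanSpace.single 1 (1:ℝ)

lemma ψm_apply (p : ℝ × ℝ) (j : Fin 2) : ψm p j = ![p.1, p.2] j := by
  fin_cases j <;>
    simp [ψm, EuclideanSpace.single_apply]

lemma ψm_contDiff : ContDiff ℝ 2 ψm :=
  (contDiff_fst.smul contDiff_const).add (contDiff_snd.smul contDiff_const)

lemma ψm_shift1 (p : ℝ × ℝ) (t : ℝ) :
    ψm p + t • EuclideanSpace.single 0 (1:ℝ) = ψm (p.1 + t, p.2) := by
  simp only [ψm, add_smul]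
  abel

lemma ψm_shift2 (p : ℝ × ℝ) (t : ℝ) :
    ψm p + t • EuclideanSpace.single 1 (1:ℝ) = ψm (p.1, p.2 + t) := by
  simp only [ψm, add_smul]
  abel

lemma ψm_norm (p : ℝ × ℝ) : ‖ψm p‖ = Real.sqrt (p.1^2 + p.2^2) := by
  rw [EuclideanSpace.norm_eq]
  congr 1
  rw [Fin.sum_univ_two, ψm_apply, ψm_apply]
  simp [sq_abs]

lemma ψm_measurePreserving :
    MeasurePreserving ψm (volume : Measure (ℝ × ℝ)) (volume : Measure (EuclideanSpace ℝ (Fin 2))) := by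
  have h1 := (volume_preserving_finTwoArrow ℝ).symm
  have h2 := (EuclideanSpace.volume_preserving_symm_measurableEquiv_toLp (Fin 2)).symm
  have h3 := h2.comp h1
  have : ψm = (MeasurableEquiv.toLp 2 (Fin 2 → ℝ)) ∘ (MeasurableEquiv.finTwoArrow).symm := by
    funext p
    show ψm p = (MeasurableEquiv.toLp 2 (Fin 2 → ℝ)) ((MeasurableEquiv.finTwoArrow).symm p)
    apply PiLp.ext
    intro j
    rw [ψm_apply]
    rfl
  rw [this]
  exact h3

lemma lap_psi {v : EuclideanSpace ℝ (Fin 2) → ℝ} (hv : ContDiff ℝ 2 v) (p : ℝ × ℝ) :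
    lap v (ψm p) = P1 (P1 (v ∘ ψm)) p + P2 (P2 (v ∘ ψm)) p := by
  have hg : ContDiff ℝ 2 (v ∘ ψm) := hv.comp ψm_contDiff
  rw [lap, Fin.sum_univ_two]
  congr 1
  · have he : (fun t : ℝ => v (ψm p + t • EuclideanSpace.single 0 (1:ℝ)))
        = fun t => (fun s => (v ∘ ψm) (s, p.2)) (p.1 + t) := by
      funext t
      simp [ψm_shift1]
    rw [he, iteratedDeriv_comp_const_add 2 (fun s => (v ∘ ψm) (s, p.2)) p.1]
    simpa using iteratedDeriv_slice1 hg p.1 p.2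
  · have he : (fun t : ℝ => v (ψm p + t • EuclideanSpace.single 1 (1:ℝ)))
        = fun t => (fun s => (v ∘ ψm) (p.1, s)) (p.2 + t) := by
      funext t
      simp [ψm_shift2]
    rw [he, iteratedDeriv_comp_const_add 2 (fun s => (v ∘ ψm) (p.1, s)) p.2]
    simpa using iteratedDeriv_slice2 hg p.1 p.2

end

noncomputable section
lemma ψm_measurableEmbedding : MeasurableEmbedding ψm := by
  have h : ψm = ⇑((MeasurableEquiv.finTwoArrow (α := ℝ)).symm.trans
      (MeasurableEquiv.toLp 2 (Fin 2 → ℝ))) := by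
    funext p
    apply PiLp.ext
    intro j
    rw [ψm_apply]
    rfl
  rw [h]
  exact MeasurableEquiv.measurableEmbedding _

lemma ψm_leftinv (x : EuclideanSpace ℝ (Fin 2)) : ψm (x 0, x 1) = x := by
  apply PiLp.ext
  intro j
  rw [ψm_apply]
  fin_cases j <;> rfl
end

noncomputable section

lemma abs_ge_of_not_mem_Ioc {T a : ℝ} (h : a ∉ Ioc (-T) T) : T ≤ |a| := by
  rw [mem_Ioc, not_and_or, not_lt, not_le] at h
  rcases h with h|h
  · exact le_abs.2 (Or.inr (by linarith))
  · exact le_abs.2 (Or.inl h.le)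

lemma square_compl {T : ℝ} (p : ℝ × ℝ) (hp : p ∉ Icc ((-T : ℝ), (-T : ℝ)) ((T : ℝ), (T : ℝ))) :
    T ≤ |p.1| ∨ T ≤ |p.2| := by
  rw [mem_Icc] at hp
  simp only [Prod.le_def, not_and_or, not_le] at hp
  rcases hp with (h|h)|(h|h)
  · exact Or.inl (le_abs.2 (Or.inr (by linarith)))
  · exact Or.inr (le_abs.2 (Or.inr (by linarith)))
  · exact Or.inl (le_abs.2 (Or.inl h.le))
  · exact Or.inr (le_abs.2 (Or.inl h.le))

lemma hasCompactSupport_of_square {f : ℝ×ℝ → ℝ} {T : ℝ}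
    (h : ∀ p : ℝ×ℝ, T ≤ |p.1| ∨ T ≤ |p.2| → f p = 0) : HasCompactSupport f := by
  apply HasCompactSupport.intro (isCompact_Icc (a := ((-T : ℝ), (-T : ℝ))) (b := ((T:ℝ), (T:ℝ))))
  intro p hp
  exact h p (square_compl p hp)

theorem ibp1 (F φ φ1 φ11 : ℝ×ℝ → ℝ) (hF : ContDiff ℝ 2 F) (T : ℝ) (hT : 0 < T)
    (hφd : ∀ p : ℝ×ℝ, HasDerivAt (fun s => φ (s, p.2)) (φ1 p) p.1)
    (hφd2 : ∀ p : ℝ×ℝ, HasDerivAt (fun s => φ1 (s, p.2)) (φ11 p) p.1)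
    (hφc : Continuous φ) (hφ1c : Continuous φ1) (hφ11c : Continuous φ11)
    (hsupp : ∀ p : ℝ×ℝ, T ≤ |p.1| ∨ T ≤ |p.2| → φ p = 0 ∧ φ1 p = 0 ∧ φ11 p = 0) :
    ∫ p : ℝ×ℝ, P1 (P1 F) p * φ p = ∫ p : ℝ×ℝ, F p * φ11 p := by
  have hFd : Differentiable ℝ F := hF.differentiable two_ne_zero
  have hP1 : ContDiff ℝ 1 (P1 F) := contDiff_P1 hF
  have hP1d : Differentiable ℝ (P1 F) := hP1.differentiable one_ne_zero
  have hP11c : Continuous (P1 (P1 F)) := continuous_P1 hP1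
  have hP1c : Continuous (P1 F) := hP1.continuous
  have hKφ : HasCompactSupport φ := hasCompactSupport_of_square (fun p hp => (hsupp p hp).1)
  have hKφ11 : HasCompactSupport φ11 := hasCompactSupport_of_square (fun p hp => (hsupp p hp).2.2)
  have hint1 : Integrable (fun p : ℝ×ℝ => P1 (P1 F) p * φ p) :=
    (hP11c.mul hφc).integrable_of_hasCompactSupport hKφ.mul_left
  have hint2 : Integrable (fun p : ℝ×ℝ => F p * φ11 p) :=
    (hF.continuous.mul hφ11c).integrable_of_hasCompactSupport hKφ11.mul_left
  have key : ∀ b : ℝ, (∫ a : ℝ, P1 (P1 F) (a, b) * φ (a, b))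
      = ∫ a : ℝ, F (a, b) * φ11 (a, b) := by
    intro b
    have hbT : φ (T, b) = 0 ∧ φ1 (T, b) = 0 ∧ φ11 (T, b) = 0 :=
      hsupp _ (Or.inl (by rw [abs_of_pos hT]))
    have hbT' : φ (-T, b) = 0 ∧ φ1 (-T, b) = 0 ∧ φ11 (-T, b) = 0 :=
      hsupp _ (Or.inl (by rw [abs_neg, abs_of_pos hT]))
    have hsub1 : Function.support (fun a : ℝ => P1 (P1 F) (a, b) * φ (a, b)) ⊆ Ioc (-T) T := by
      intro a ha
      by_contra hc
      exact (Function.mem_support.1 ha)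
        (by rw [(hsupp (a, b) (Or.inl (abs_ge_of_not_mem_Ioc hc))).1, mul_zero])
    have hsub2 : Function.support (fun a : ℝ => F (a, b) * φ11 (a, b)) ⊆ Ioc (-T) T := by
      intro a ha
      by_contra hc
      exact (Function.mem_support.1 ha)
        (by rw [(hsupp (a, b) (Or.inl (abs_ge_of_not_mem_Ioc hc))).2.2, mul_zero])
    have ibpA := integral_mul_deriv_eq_deriv_mul
      (u := fun a => φ (a,b)) (u' := fun a => φ1 (a,b))
      (v := fun a => P1 F (a,b)) (v' := fun a => P1 (P1 F) (a,b)) (a := -T) (b := T)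
      (fun x _ => hφd (x,b)) (fun x _ => hasDerivAt_slice1 hP1d x b)
      ((hφ1c.comp (continuous_id.prodMk continuous_const)).intervalIntegrable _ _)
      ((hP11c.comp (continuous_id.prodMk continuous_const)).intervalIntegrable _ _)
    have ibpB := integral_mul_deriv_eq_deriv_mul
      (u := fun a => φ1 (a,b)) (u' := fun a => φ11 (a,b))
      (v := fun a => F (a,b)) (v' := fun a => P1 F (a,b)) (a := -T) (b := T)
      (fun x _ => hφd2 (x,b)) (fun x _ => hasDerivAt_slice1 hFd x b)
      ((hφ11c.comp (continuous_id.prodMk continuous_const)).intervalIntegrable _ _)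
      ((hP1c.comp (continuous_id.prodMk continuous_const)).intervalIntegrable _ _)
    have ec1 : (fun a : ℝ => P1 (P1 F) (a,b) * φ (a,b)) = fun a => φ (a,b) * P1 (P1 F) (a,b) :=
      funext fun a => mul_comm _ _
    have ec2 : (fun a : ℝ => F (a,b) * φ11 (a,b)) = fun a => φ11 (a,b) * F (a,b) :=
      funext fun a => mul_comm _ _
    calc ∫ a : ℝ, P1 (P1 F) (a, b) * φ (a, b)
        = ∫ a in (-T)..T, P1 (P1 F) (a, b) * φ (a, b) :=
          (integral_eq_integral_of_support_subset hsub1).symm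
      _ = ∫ a in (-T)..T, φ (a,b) * P1 (P1 F) (a,b) := by rw [ec1]
      _ = - ∫ a in (-T)..T, φ1 (a,b) * P1 F (a,b) := by
          rw [ibpA]; simp [hbT.1, hbT'.1]
      _ = ∫ a in (-T)..T, φ11 (a,b) * F (a,b) := by
          rw [ibpB]; simp [hbT.2.1, hbT'.2.1]
      _ = ∫ a in (-T)..T, F (a, b) * φ11 (a, b) := by rw [ec2]
      _ = ∫ a : ℝ, F (a, b) * φ11 (a, b) := integral_eq_integral_of_support_subset hsub2
  have hi1 : Integrable (fun p : ℝ×ℝ => P1 (P1 F) p * φ p) (volume.prod volume) := by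
    rwa [← Measure.volume_eq_prod]
  have hi2 : Integrable (fun p : ℝ×ℝ => F p * φ11 p) (volume.prod volume) := by
    rwa [← Measure.volume_eq_prod]
  have e1 := integral_prod_symm (fun p : ℝ×ℝ => P1 (P1 F) p * φ p) hi1
  have e2 := integral_prod_symm (fun p : ℝ×ℝ => F p * φ11 p) hi2
  rw [← Measure.volume_eq_prod] at e1 e2
  rw [e1, e2]
  exact integral_congr_ae (Eventually.of_forall (fun b => key b))

theorem ibp2 (F φ φ2 φ22 : ℝ×ℝ → ℝ) (hF : ContDiff ℝ 2 F) (T : ℝ) (hT : 0 < T)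
    (hφd : ∀ p : ℝ×ℝ, HasDerivAt (fun t => φ (p.1, t)) (φ2 p) p.2)
    (hφd2 : ∀ p : ℝ×ℝ, HasDerivAt (fun t => φ2 (p.1, t)) (φ22 p) p.2)
    (hφc : Continuous φ) (hφ2c : Continuous φ2) (hφ22c : Continuous φ22)
    (hsupp : ∀ p : ℝ×ℝ, T ≤ |p.1| ∨ T ≤ |p.2| → φ p = 0 ∧ φ2 p = 0 ∧ φ22 p = 0) :
    ∫ p : ℝ×ℝ, P2 (P2 F) p * φ p = ∫ p : ℝ×ℝ, F p * φ22 p := by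
  have hFd : Differentiable ℝ F := hF.differentiable two_ne_zero
  have hP2 : ContDiff ℝ 1 (P2 F) := contDiff_P2 hF
  have hP2d : Differentiable ℝ (P2 F) := hP2.differentiable one_ne_zero
  have hP22c : Continuous (P2 (P2 F)) := continuous_P2 hP2
  have hP2c : Continuous (P2 F) := hP2.continuous
  have hKφ : HasCompactSupport φ := hasCompactSupport_of_square (fun p hp => (hsupp p hp).1)
  have hKφ22 : HasCompactSupport φ22 := hasCompactSupport_of_square (fun p hp => (hsupp p hp).2.2)
  have hint1 : Integrable (fun p : ℝ×ℝ => P2 (P2 F) p * φ p) :=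
    (hP22c.mul hφc).integrable_of_hasCompactSupport hKφ.mul_left
  have hint2 : Integrable (fun p : ℝ×ℝ => F p * φ22 p) :=
    (hF.continuous.mul hφ22c).integrable_of_hasCompactSupport hKφ22.mul_left
  have key : ∀ a : ℝ, (∫ b : ℝ, P2 (P2 F) (a, b) * φ (a, b))
      = ∫ b : ℝ, F (a, b) * φ22 (a, b) := by
    intro a
    have hbT : φ (a, T) = 0 ∧ φ2 (a, T) = 0 ∧ φ22 (a, T) = 0 :=
      hsupp _ (Or.inr (by rw [abs_of_pos hT]))
    have hbT' : φ (a, -T) = 0 ∧ φ2 (a, -T) = 0 ∧ φ22 (a, -T) = 0 :=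
      hsupp _ (Or.inr (by rw [abs_neg, abs_of_pos hT]))
    have hsub1 : Function.support (fun b : ℝ => P2 (P2 F) (a, b) * φ (a, b)) ⊆ Ioc (-T) T := by
      intro b hb
      by_contra hc
      exact (Function.mem_support.1 hb)
        (by rw [(hsupp (a, b) (Or.inr (abs_ge_of_not_mem_Ioc hc))).1, mul_zero])
    have hsub2 : Function.support (fun b : ℝ => F (a, b) * φ22 (a, b)) ⊆ Ioc (-T) T := by
      intro b hb
      by_contra hc
      exact (Function.mem_support.1 hb)
        (by rw [(hsupp (a, b) (Or.inr (abs_ge_of_not_mem_Ioc hc))).2.2, mul_zero])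
    have ibpA := integral_mul_deriv_eq_deriv_mul
      (u := fun b => φ (a,b)) (u' := fun b => φ2 (a,b))
      (v := fun b => P2 F (a,b)) (v' := fun b => P2 (P2 F) (a,b)) (a := -T) (b := T)
      (fun x _ => hφd (a,x)) (fun x _ => hasDerivAt_slice2 hP2d a x)
      ((hφ2c.comp (continuous_const.prodMk continuous_id)).intervalIntegrable _ _)
      ((hP22c.comp (continuous_const.prodMk continuous_id)).intervalIntegrable _ _)
    have ibpB := integral_mul_deriv_eq_deriv_mul
      (u := fun b => φ2 (a,b)) (u' := fun b => φ22 (a,b))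
      (v := fun b => F (a,b)) (v' := fun b => P2 F (a,b)) (a := -T) (b := T)
      (fun x _ => hφd2 (a,x)) (fun x _ => hasDerivAt_slice2 hFd a x)
      ((hφ22c.comp (continuous_const.prodMk continuous_id)).intervalIntegrable _ _)
      ((hP2c.comp (continuous_const.prodMk continuous_id)).intervalIntegrable _ _)
    have ec1 : (fun b : ℝ => P2 (P2 F) (a,b) * φ (a,b)) = fun b => φ (a,b) * P2 (P2 F) (a,b) :=
      funext fun b => mul_comm _ _
    have ec2 : (fun b : ℝ => F (a,b) * φ22 (a,b)) = fun b => φ22 (a,b) * F (a,b) :=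
      funext fun b => mul_comm _ _
    calc ∫ b : ℝ, P2 (P2 F) (a, b) * φ (a, b)
        = ∫ b in (-T)..T, P2 (P2 F) (a, b) * φ (a, b) :=
          (integral_eq_integral_of_support_subset hsub1).symm
      _ = ∫ b in (-T)..T, φ (a,b) * P2 (P2 F) (a,b) := by rw [ec1]
      _ = - ∫ b in (-T)..T, φ2 (a,b) * P2 F (a,b) := by
          rw [ibpA]; simp [hbT.1, hbT'.1]
      _ = ∫ b in (-T)..T, φ22 (a,b) * F (a,b) := by
          rw [ibpB]; simp [hbT.2.1, hbT'.2.1]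
      _ = ∫ b in (-T)..T, F (a, b) * φ22 (a, b) := by rw [ec2]
      _ = ∫ b : ℝ, F (a, b) * φ22 (a, b) := integral_eq_integral_of_support_subset hsub2
  have hi1 : Integrable (fun p : ℝ×ℝ => P2 (P2 F) p * φ p) (volume.prod volume) := by
    rwa [← Measure.volume_eq_prod]
  have hi2 : Integrable (fun p : ℝ×ℝ => F p * φ22 p) (volume.prod volume) := by
    rwa [← Measure.volume_eq_prod]
  have e1 := integral_prod (fun p : ℝ×ℝ => P2 (P2 F) p * φ p) hi1
  have e2 := integral_prod (fun p : ℝ×ℝ => F p * φ22 p) hi2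
  rw [← Measure.volume_eq_prod] at e1 e2
  rw [e1, e2]
  exact integral_congr_ae (Eventually.of_forall (fun a => key a))

end

noncomputable section

variable {S : ℝ} (hS : 3 ≤ S)

def ω (S r : ℝ) : ℝ := -(F1 S (r^2) * (2*r))

def TT (S : ℝ) : ℝ := Real.exp (S/2)

include hS

lemma TT_sq : (TT S)^2 = Real.exp S := by
  rw [TT, sq, ← Real.exp_add]
  norm_num

lemma TT_ge_one : 1 ≤ TT S := by
  rw [TT, ← Real.exp_zero]
  exact Real.exp_le_exp.2 (by linarith)

lemma hω_deriv : ∀ r : ℝ, HasDerivAt (fun r => -(F0 S (r^2))) (ω S r) r := by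
  intro r
  have h1 : HasDerivAt (fun x : ℝ => x^2) (2*r) r := by
    simpa using hasDerivAt_pow 2 r
  have h2 := ((fd1 hS (r^2)).comp r h1).neg
  simpa [ω, mul_comm, Function.comp_def, Pi.neg_def] using h2

lemma hω_cont : Continuous (ω S) := by
  unfold ω
  exact (((contF1 hS).comp (continuous_pow 2)).mul (continuous_const.mul continuous_id)).neg

lemma hω_nonneg : ∀ r : ℝ, 0 ≤ r → 0 ≤ ω S r := by
  intro r hr
  rw [ω, neg_nonneg]
  exact mul_nonpos_of_nonpos_of_nonneg (F1_nonpos hS _) (by linarith)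

lemma hω_zero_of_ge : ∀ r : ℝ, TT S ≤ |r| → ω S r = 0 := by
  intro r hr
  have h2 : Real.exp S ≤ r^2 := by
    rw [← TT_sq hS, ← sq_abs r]
    have h0 : (0:ℝ) ≤ TT S := by linarith [TT_ge_one hS]
    exact pow_le_pow_left₀ h0 hr 2
  rw [ω, F1_eq5 hS h2, zero_mul, neg_zero]

lemma hω_zero_small : ∀ r : ℝ, r^2 ≤ 1 → ω S r = 0 := by
  intro r hr
  rw [ω, F1_eq1 hS hr, zero_mul, neg_zero]

lemma hωK : HasCompactSupport (ω S) := by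
  apply HasCompactSupport.intro (isCompact_Icc (a := -(TT S)) (b := TT S))
  intro r hr
  rw [mem_Icc, not_and_or, not_le, not_le] at hr
  apply hω_zero_of_ge hS
  rcases hr with h|h
  · exact le_abs.2 (Or.inr (by linarith))
  · exact le_abs.2 (Or.inl h.le)

lemma hω_int : Integrable (ω S) := (hω_cont hS).integrable_of_hasCompactSupport (hωK hS)

/-- FTC : the tail integral of ω equals the profile. -/
lemma omega_tail {c : ℝ} (hc : 0 ≤ c) : ∫ r in Ioi c, ω S r = F0 S (c^2) := by
  set T2 := max (TT S) c with hT2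
  have hcT2 : c ≤ T2 := le_max_right _ _
  have hT2T : TT S ≤ T2 := le_max_left _ _
  have hsplit : Ioc c T2 ∪ Ioi T2 = Ioi c := Ioc_union_Ioi_eq_Ioi hcT2
  have hzero : ∀ r ∈ Ioi T2, ω S r = 0 := by
    intro r hr
    rw [mem_Ioi] at hr
    apply hω_zero_of_ge hS
    have : 0 ≤ r := le_trans (by linarith [TT_ge_one hS]) hr.le
    rw [abs_of_nonneg this]
    linarith
  have hint1 : IntegrableOn (ω S) (Ioc c T2) := (hω_int hS).integrableOn
  have hint2 : IntegrableOn (ω S) (Ioi T2) := (hω_int hS).integrableOn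
  have hdisj : Disjoint (Ioc c T2) (Ioi T2) := Ioc_disjoint_Ioi le_rfl
  rw [← hsplit, setIntegral_union hdisj measurableSet_Ioi hint1 hint2]
  have h0 : ∫ r in Ioi T2, ω S r = 0 := by
    rw [setIntegral_congr_fun measurableSet_Ioi hzero]
    simp
  have h1 : ∫ r in Ioc c T2, ω S r = F0 S (c^2) := by
    have hftc := intervalIntegral.integral_eq_sub_of_hasDerivAt
      (f := fun r => -(F0 S (r^2))) (f' := ω S) (a := c) (b := T2)
      (fun x _ => hω_deriv hS x) ((hω_cont hS).intervalIntegrable c T2)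
    rw [intervalIntegral.integral_of_le hcT2] at hftc
    rw [hftc]
    have hT2sq : Real.exp S ≤ T2^2 := by
      rw [← TT_sq hS]
      have h0 : (0:ℝ) ≤ TT S := by linarith [TT_ge_one hS]
      exact pow_le_pow_left₀ h0 hT2T 2
    simp [F0_eq5 hS hT2sq]
  rw [h0, h1, add_zero]

/-- The key Fubini step. -/
theorem weight_step {v : EuclideanSpace ℝ (Fin 2) → ℝ} {C : ℝ}
    (hlc : Continuous (fun x => lap v x))
    (hC : 0 < C)
    (hJ : ∀ r ≥ (1:ℝ), C ≤ ∫ x in Metric.ball (0 : EuclideanSpace ℝ (Fin 2)) r, lap v x) :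
    C ≤ ∫ x : EuclideanSpace ℝ (Fin 2), lap v x * F0 S (‖x‖^2) := by
  classical
  set T := TT S with hT
  have hT1 : 1 ≤ T := TT_ge_one hS
  set Z : Set (EuclideanSpace ℝ (Fin 2) × ℝ) := {q | ‖q.1‖ < q.2} with hZ
  have hZopen : IsOpen Z := isOpen_lt (continuous_norm.comp continuous_fst) continuous_snd
  set Φ : EuclideanSpace ℝ (Fin 2) × ℝ → ℝ :=
    Z.indicator (fun q => lap v q.1 * ω S q.2) with hΦ
  -- bounds
  obtain ⟨Mv, hMv⟩ := (isCompact_closedBall (0 : EuclideanSpace ℝ (Fin 2)) T).exists_bound_of_continuousOn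
    hlc.continuousOn
  obtain ⟨Mω, hMω⟩ := (isCompact_Icc (a := -T) (b := T)).exists_bound_of_continuousOn
    (hω_cont hS).continuousOn
  have hMv0 : 0 ≤ Mv := le_trans (norm_nonneg _) (hMv 0 (Metric.mem_closedBall_self (by linarith)))
  have hMω0 : 0 ≤ Mω := le_trans (norm_nonneg _) (hMω 0 (by constructor <;> linarith))
  set D : EuclideanSpace ℝ (Fin 2) × ℝ → ℝ :=
    (Metric.closedBall (0 : EuclideanSpace ℝ (Fin 2)) T ×ˢ Icc (-T) T).indicator
      (fun _ => Mv * Mω) with hD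
  have hDmeas : MeasurableSet (Metric.closedBall (0 : EuclideanSpace ℝ (Fin 2)) T ×ˢ Icc (-T) T) :=
    (measurableSet_closedBall).prod measurableSet_Icc
  have hDint : Integrable D := by
    rw [hD, integrable_indicator_iff hDmeas]
    refine integrableOn_const ?_
    apply ne_of_lt
    rw [Measure.volume_eq_prod, Measure.prod_prod]
    exact ENNReal.mul_lt_top measure_closedBall_lt_top measure_Icc_lt_top
  have hΦmeas : AEStronglyMeasurable Φ (volume : Measure (EuclideanSpace ℝ (Fin 2) × ℝ)) :=
    (((hlc.comp continuous_fst).mul ((hω_cont hS).comp continuous_snd)).aestronglyMeasurable).indicator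
      hZopen.measurableSet
  have hbound : ∀ q, ‖Φ q‖ ≤ D q := by
    intro q
    by_cases hq : Φ q = 0
    · rw [hq, norm_zero, hD]
      apply Set.indicator_apply_nonneg
      intro _
      positivity
    · have hqZ : q ∈ Z := by
        by_contra hc
        exact hq (Set.indicator_of_notMem hc _)
      have hωne : ω S q.2 ≠ 0 := by
        intro h0
        apply hq
        rw [hΦ, Set.indicator_of_mem hqZ, h0, mul_zero]
      have hq2T : q.2 < T := by
        by_contra hc
        push_neg at hc
        exact hωne (hω_zero_of_ge hS _ (by rw [abs_of_nonneg (by linarith)]; exact hc))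
      have hq2pos : 0 < q.2 := lt_of_le_of_lt (norm_nonneg q.1) hqZ
      have hqmem : q ∈ Metric.closedBall (0 : EuclideanSpace ℝ (Fin 2)) T ×ˢ Icc (-T) T := by
        constructor
        · rw [Metric.mem_closedBall, dist_zero_right]
          exact le_trans (le_of_lt hqZ) (by linarith)
        · exact ⟨by linarith, by linarith⟩
      rw [hΦ, Set.indicator_of_mem hqZ, hD, Set.indicator_of_mem hqmem]
      rw [Real.norm_eq_abs, abs_mul]
      apply mul_le_mul
      · have := hMv q.1 (by rw [Metric.mem_closedBall, dist_zero_right]; exact le_trans (le_of_lt hqZ) (by linarith))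
        rwa [Real.norm_eq_abs] at this
      · have := hMω q.2 ⟨by linarith, by linarith⟩
        rwa [Real.norm_eq_abs] at this
      · exact abs_nonneg _
      · exact hMv0
  have hΦint : Integrable Φ := Integrable.mono' hDint hΦmeas (Eventually.of_forall hbound)
  -- inner integral in r
  have inner_r : ∀ x : EuclideanSpace ℝ (Fin 2),
      (∫ r : ℝ, Φ (x, r)) = lap v x * F0 S (‖x‖^2) := by
    intro x
    have hfun : (fun r => Φ (x, r)) = (Ioi ‖x‖).indicator (fun r => lap v x * ω S r) := by
      funext r
      by_cases h : ‖x‖ < r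
      · rw [hΦ, Set.indicator_of_mem (by exact h : (x, r) ∈ Z),
          Set.indicator_of_mem (mem_Ioi.2 h)]
      · rw [hΦ, Set.indicator_of_notMem (by exact h : ¬ (x,r) ∈ Z),
          Set.indicator_of_notMem (fun hc => h (mem_Ioi.1 hc))]
    rw [hfun, MeasureTheory.integral_indicator measurableSet_Ioi, MeasureTheory.integral_const_mul,
      omega_tail hS (norm_nonneg x)]
  -- inner integral in x
  have inner_x : ∀ r : ℝ,
      (∫ x : EuclideanSpace ℝ (Fin 2), Φ (x, r))
        = ω S r * ∫ x in Metric.ball (0 : EuclideanSpace ℝ (Fin 2)) r, lap v x := by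
    intro r
    have hfun : (fun x : EuclideanSpace ℝ (Fin 2) => Φ (x, r))
        = (Metric.ball (0 : EuclideanSpace ℝ (Fin 2)) r).indicator (fun x => lap v x * ω S r) := by
      funext x
      by_cases h : ‖x‖ < r
      · rw [hΦ, Set.indicator_of_mem (by exact h : (x, r) ∈ Z),
          Set.indicator_of_mem (mem_ball_zero_iff.2 h)]
      · rw [hΦ, Set.indicator_of_notMem (by exact h : ¬ (x,r) ∈ Z),
          Set.indicator_of_notMem (fun hc => h (mem_ball_zero_iff.1 hc))]
    rw [hfun, MeasureTheory.integral_indicator Metric.isOpen_ball.measurableSet, MeasureTheory.integral_mul_const]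
    ring
  -- Fubini
  have hswap := MeasureTheory.integral_integral_swap
    (f := fun (x : EuclideanSpace ℝ (Fin 2)) (r : ℝ) => Φ (x, r))
    (by rw [← Measure.volume_eq_prod] at *; exact hΦint)
  -- the r-side integral
  set J : ℝ → ℝ := fun r => ∫ x in Metric.ball (0 : EuclideanSpace ℝ (Fin 2)) r, lap v x with hJdef
  have hg_int : Integrable (fun r => ω S r * J r) := by
    have h1 : Integrable Φ (volume.prod volume) := by rwa [← Measure.volume_eq_prod]
    have h2 := h1.integral_prod_right
    apply h2.congr
    filter_upwards with r
    rw [← inner_x r]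
  have hr_eq : (∫ r : ℝ, ∫ x : EuclideanSpace ℝ (Fin 2), Φ (x, r)) = ∫ r : ℝ, ω S r * J r :=
    integral_congr_ae (Eventually.of_forall (fun r => inner_x r))
  have hx_eq : (∫ x : EuclideanSpace ℝ (Fin 2), ∫ r : ℝ, Φ (x, r))
      = ∫ x : EuclideanSpace ℝ (Fin 2), lap v x * F0 S (‖x‖^2) :=
    integral_congr_ae (Eventually.of_forall (fun x => inner_r x))
  -- lower bound on the r-side
  have hgJ : C ≤ ∫ r : ℝ, ω S r * J r := by
    have hsplit := integral_add_compl (measurableSet_Iic (a := (1:ℝ))) hg_int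
    have hzero : ∫ r in Iic (1:ℝ), ω S r * J r = 0 := by
      rw [setIntegral_congr_fun measurableSet_Iic (g := fun _ => (0:ℝ))]
      · simp
      · intro r hr
        rw [mem_Iic] at hr
        rcases le_or_gt r 0 with h|h
        · have : Metric.ball (0 : EuclideanSpace ℝ (Fin 2)) r = ∅ := Metric.ball_eq_empty.2 h
          simp [hJdef, this]
        · have : ω S r = 0 := hω_zero_small hS r (by nlinarith)
          simp [this]
    have hmono : ∫ r in Ioi (1:ℝ), C * ω S r ≤ ∫ r in Ioi (1:ℝ), ω S r * J r := by
      apply setIntegral_mono_on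
      · exact ((hω_int hS).const_mul C).integrableOn
      · exact hg_int.integrableOn
      · exact measurableSet_Ioi
      · intro r hr
        rw [mem_Ioi] at hr
        have h1 := hJ r hr.le
        have h2 := hω_nonneg hS r (by linarith)
        calc C * ω S r = ω S r * C := mul_comm _ _
          _ ≤ ω S r * J r := mul_le_mul_of_nonneg_left h1 h2
    have hωIoi : ∫ r in Ioi (1:ℝ), ω S r = 1 := by
      have := omega_tail hS (c := 1) (by norm_num)
      rw [this, one_pow, F0_one hS]
    have hCω : ∫ r in Ioi (1:ℝ), C * ω S r = C := by
      rw [MeasureTheory.integral_const_mul, hωIoi, mul_one]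
    have hcompl : (Iic (1:ℝ))ᶜ = Ioi 1 := compl_Iic
    calc C = ∫ r in Ioi (1:ℝ), C * ω S r := hCω.symm
      _ ≤ ∫ r in Ioi (1:ℝ), ω S r * J r := hmono
      _ = 0 + ∫ r in Ioi (1:ℝ), ω S r * J r := by ring
      _ = (∫ r in Iic (1:ℝ), ω S r * J r) + ∫ r in (Iic (1:ℝ))ᶜ, ω S r * J r := by
          rw [hzero, hcompl]
      _ = ∫ r : ℝ, ω S r * J r := hsplit
  calc C ≤ ∫ r : ℝ, ω S r * J r := hgJ
    _ = ∫ r : ℝ, ∫ x : EuclideanSpace ℝ (Fin 2), Φ (x, r) := hr_eq.symm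
    _ = ∫ x : EuclideanSpace ℝ (Fin 2), ∫ r : ℝ, Φ (x, r) := hswap.symm
    _ = ∫ x : EuclideanSpace ℝ (Fin 2), lap v x * F0 S (‖x‖^2) := hx_eq

end

noncomputable section

set_option maxHeartbeats 1000000 in
theorem stmt12 :
    ¬ ∃ (v : EuclideanSpace ℝ (Fin 2) → ℝ) (C : ℝ), ContDiff ℝ 2 v ∧
      (∀ x, v x < 0) ∧ 0 < C ∧
      ∀ r ≥ (1 : ℝ), C ≤ ∫ x in Metric.ball (0 : EuclideanSpace ℝ (Fin 2)) r, lap v x := by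
  rintro ⟨v, C, hv, hneg, hC, hJ⟩
  -- the pulled-back function on ℝ²
  set g : ℝ × ℝ → ℝ := v ∘ ψm with hgdef
  have hg : ContDiff ℝ 2 g := hv.comp ψm_contDiff
  have hgneg : ∀ p, g p < 0 := fun p => hneg _
  -- continuity of the Laplacian
  have hlapc : Continuous (fun x => lap v x) := by
    have hcont : Continuous (fun p : ℝ×ℝ => P1 (P1 g) p + P2 (P2 g) p) :=
      (continuous_P1 (contDiff_P1 hg)).add (continuous_P2 (contDiff_P2 hg))
    have hco : Continuous (fun x : EuclideanSpace ℝ (Fin 2) => (x 0, x 1)) := by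
      refine Continuous.prodMk ?_ ?_
      · exact (EuclideanSpace.proj (0 : Fin 2)).continuous
      · exact (EuclideanSpace.proj (1 : Fin 2)).continuous
    have heq : (fun x : EuclideanSpace ℝ (Fin 2) => lap v x)
        = (fun p : ℝ×ℝ => P1 (P1 g) p + P2 (P2 g) p) ∘ (fun x => (x 0, x 1)) := by
      funext x
      have := lap_psi hv (x 0, x 1)
      rw [ψm_leftinv x] at this
      exact this
    rw [heq]
    exact hcont.comp hco
  -- sup bound of v on the ball of radius 2
  obtain ⟨M, hM⟩ := (isCompact_closedBall (0 : EuclideanSpace ℝ (Fin 2)) 2).exists_bound_of_continuousOn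
    (hv.continuous.continuousOn)
  have hM0 : 0 ≤ M := le_trans (norm_nonneg _) (hM 0 (Metric.mem_closedBall_self (by norm_num)))
  -- choose the parameter S
  set S : ℝ := max 3 (96*M/C + 2) with hSdef
  have hS : 3 ≤ S := le_max_left _ _
  have hS2 : 96*M/C + 2 ≤ S := le_max_right _ _
  have hS1pos : 0 < S - 1 := by linarith
  have hSC : 96*M*(S-1)⁻¹ < C := by
    rw [← div_eq_mul_inv, div_lt_iff₀ hS1pos]
    have h1 : C * (96*M/C + 1) ≤ C * (S-1) := by
      apply mul_le_mul_of_nonneg_left _ hC.le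
      linarith
    have h2 : C * (96*M/C + 1) = 96*M + C := by
      field_simp
    nlinarith
  set T := TT S with hTdef
  have hT1 : (1:ℝ) ≤ T := TT_ge_one hS
  have hT0 : (0:ℝ) < T := by linarith
  -- the cutoff and its derivatives
  set uu : ℝ×ℝ → ℝ := fun p => p.1^2 + p.2^2 with huu
  set φ : ℝ×ℝ → ℝ := fun p => F0 S (uu p) with hφdef
  set φ1 : ℝ×ℝ → ℝ := fun p => F1 S (uu p) * (2*p.1) with hφ1def
  set φ2 : ℝ×ℝ → ℝ := fun p => F1 S (uu p) * (2*p.2) with hφ2def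
  set φ11 : ℝ×ℝ → ℝ := fun p => F2 S (uu p) * (2*p.1)^2 + F1 S (uu p) * 2 with hφ11def
  set φ22 : ℝ×ℝ → ℝ := fun p => F2 S (uu p) * (2*p.2)^2 + F1 S (uu p) * 2 with hφ22def
  have huucont : Continuous uu := (continuous_fst.pow 2).add (continuous_snd.pow 2)
  have hφc : Continuous φ := (contF0 hS).comp huucont
  have hφ1c : Continuous φ1 := ((contF1 hS).comp huucont).mul (continuous_const.mul continuous_fst)
  have hφ2c : Continuous φ2 := ((contF1 hS).comp huucont).mul (continuous_const.mul continuous_snd)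
  have hφ11c : Continuous φ11 :=
    (((fc2 hS).comp huucont).mul ((continuous_const.mul continuous_fst).pow 2)).add
      (((contF1 hS).comp huucont).mul continuous_const)
  have hφ22c : Continuous φ22 :=
    (((fc2 hS).comp huucont).mul ((continuous_const.mul continuous_snd).pow 2)).add
      (((contF1 hS).comp huucont).mul continuous_const)
  -- derivative facts
  have hd1 : ∀ p : ℝ×ℝ, HasDerivAt (fun s => φ (s, p.2)) (φ1 p) p.1 := by
    intro p
    have hu : HasDerivAt (fun s : ℝ => s^2 + p.2^2) (2*p.1) p.1 := by
      simpa using (hasDerivAt_pow 2 p.1).add_const (p.2^2)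
    have := (fd1 hS (uu p)).comp p.1 hu
    simpa [hφdef, huu, Function.comp_def] using this
  have hd11 : ∀ p : ℝ×ℝ, HasDerivAt (fun s => φ1 (s, p.2)) (φ11 p) p.1 := by
    intro p
    have hu : HasDerivAt (fun s : ℝ => s^2 + p.2^2) (2*p.1) p.1 := by
      simpa using (hasDerivAt_pow 2 p.1).add_const (p.2^2)
    have h1 : HasDerivAt (fun s : ℝ => F1 S (s^2 + p.2^2)) (F2 S (uu p) * (2*p.1)) p.1 := by
      have := (fd2 hS (uu p)).comp p.1 hu
      simpa [huu, Function.comp_def] using this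
    have h2 : HasDerivAt (fun s : ℝ => 2*s) 2 p.1 := by
      simpa using (hasDerivAt_id p.1).const_mul 2
    have h3 := h1.mul h2
    have h4 : HasDerivAt (fun s => φ1 (s, p.2))
        (F2 S (uu p) * (2*p.1) * (2*p.1) + F1 S (p.1^2 + p.2^2) * 2) p.1 := by
      simpa [hφ1def, huu, Pi.mul_def] using h3
    convert h4 using 1
    simp [hφ11def, huu]
    ring
  have hd2 : ∀ p : ℝ×ℝ, HasDerivAt (fun t => φ (p.1, t)) (φ2 p) p.2 := by
    intro p
    have hu : HasDerivAt (fun t : ℝ => p.1^2 + t^2) (2*p.2) p.2 := by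
      simpa using ((hasDerivAt_pow 2 p.2)).const_add (p.1^2)
    have := (fd1 hS (uu p)).comp p.2 hu
    simpa [hφdef, huu, Function.comp_def] using this
  have hd22 : ∀ p : ℝ×ℝ, HasDerivAt (fun t => φ2 (p.1, t)) (φ22 p) p.2 := by
    intro p
    have hu : HasDerivAt (fun t : ℝ => p.1^2 + t^2) (2*p.2) p.2 := by
      simpa using ((hasDerivAt_pow 2 p.2)).const_add (p.1^2)
    have h1 : HasDerivAt (fun t : ℝ => F1 S (p.1^2 + t^2)) (F2 S (uu p) * (2*p.2)) p.2 := by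
      have := (fd2 hS (uu p)).comp p.2 hu
      simpa [huu, Function.comp_def] using this
    have h2 : HasDerivAt (fun t : ℝ => 2*t) 2 p.2 := by
      simpa using (hasDerivAt_id p.2).const_mul 2
    have h3 := h1.mul h2
    have h4 : HasDerivAt (fun t => φ2 (p.1, t))
        (F2 S (uu p) * (2*p.2) * (2*p.2) + F1 S (p.1^2 + p.2^2) * 2) p.2 := by
      simpa [hφ2def, huu, Pi.mul_def] using h3
    convert h4 using 1
    simp [hφ22def, huu]
    ring
  -- support facts
  have hTu : ∀ p : ℝ×ℝ, T ≤ |p.1| ∨ T ≤ |p.2| → Real.exp S ≤ uu p := by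
    intro p hp
    rw [← TT_sq hS, ← hTdef]
    simp only [huu]
    rcases hp with h|h
    · have : T^2 ≤ p.1^2 := by rw [← sq_abs p.1]; exact pow_le_pow_left₀ hT0.le h 2
      nlinarith [sq_nonneg p.2]
    · have : T^2 ≤ p.2^2 := by rw [← sq_abs p.2]; exact pow_le_pow_left₀ hT0.le h 2
      nlinarith [sq_nonneg p.1]
  have hsupp1 : ∀ p : ℝ×ℝ, T ≤ |p.1| ∨ T ≤ |p.2| → φ p = 0 ∧ φ1 p = 0 ∧ φ11 p = 0 := by
    intro p hp
    have h := hTu p hp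
    refine ⟨?_, ?_, ?_⟩
    · simp [hφdef, F0_eq5 hS h]
    · simp [hφ1def, F1_eq5 hS h]
    · simp [hφ11def, F1_eq5 hS h, F2_eq5 hS h]
  have hsupp2 : ∀ p : ℝ×ℝ, T ≤ |p.1| ∨ T ≤ |p.2| → φ p = 0 ∧ φ2 p = 0 ∧ φ22 p = 0 := by
    intro p hp
    have h := hTu p hp
    refine ⟨?_, ?_, ?_⟩
    · simp [hφdef, F0_eq5 hS h]
    · simp [hφ2def, F1_eq5 hS h]
    · simp [hφ22def, F1_eq5 hS h, F2_eq5 hS h]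
  -- step 1 : C ≤ ∫ lap v · φ_E
  have hstep1 := weight_step hS hlapc hC hJ
  -- step 2 : transfer to ℝ²
  have htrans : (∫ x : EuclideanSpace ℝ (Fin 2), lap v x * F0 S (‖x‖^2))
      = ∫ p : ℝ×ℝ, (P1 (P1 g) p + P2 (P2 g) p) * φ p := by
    rw [← ψm_measurePreserving.integral_comp ψm_measurableEmbedding
      (fun x => lap v x * F0 S (‖x‖^2))]
    apply MeasureTheory.integral_congr_ae
    filter_upwards with p
    rw [lap_psi hv p, ψm_norm p, Real.sq_sqrt (by positivity : (0:ℝ) ≤ p.1^2 + p.2^2)]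
  -- step 3 : integration by parts
  have hKφ : HasCompactSupport φ := hasCompactSupport_of_square (fun p hp => (hsupp1 p hp).1)
  have hint1 : Integrable (fun p : ℝ×ℝ => P1 (P1 g) p * φ p) :=
    ((continuous_P1 (contDiff_P1 hg)).mul hφc).integrable_of_hasCompactSupport hKφ.mul_left
  have hint2 : Integrable (fun p : ℝ×ℝ => P2 (P2 g) p * φ p) :=
    ((continuous_P2 (contDiff_P2 hg)).mul hφc).integrable_of_hasCompactSupport hKφ.mul_left
  have hsplit : (∫ p : ℝ×ℝ, (P1 (P1 g) p + P2 (P2 g) p) * φ p)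
      = (∫ p : ℝ×ℝ, P1 (P1 g) p * φ p) + ∫ p : ℝ×ℝ, P2 (P2 g) p * φ p := by
    rw [← integral_add hint1 hint2]
    apply MeasureTheory.integral_congr_ae
    filter_upwards with p
    ring
  have hibp1 := ibp1 g φ φ1 φ11 hg T hT0 hd1 hd11 hφc hφ1c hφ11c hsupp1
  have hibp2 := ibp2 g φ φ2 φ22 hg T hT0 hd2 hd22 hφc hφ2c hφ22c hsupp2
  have hKφ11 : HasCompactSupport φ11 := hasCompactSupport_of_square (fun p hp => (hsupp1 p hp).2.2)
  have hKφ22 : HasCompactSupport φ22 := hasCompactSupport_of_square (fun p hp => (hsupp2 p hp).2.2)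
  have hint3 : Integrable (fun p : ℝ×ℝ => g p * φ11 p) :=
    (hg.continuous.mul hφ11c).integrable_of_hasCompactSupport hKφ11.mul_left
  have hint4 : Integrable (fun p : ℝ×ℝ => g p * φ22 p) :=
    (hg.continuous.mul hφ22c).integrable_of_hasCompactSupport hKφ22.mul_left
  have hcomb : (∫ p : ℝ×ℝ, (P1 (P1 g) p + P2 (P2 g) p) * φ p)
      = ∫ p : ℝ×ℝ, g p * (φ11 p + φ22 p) := by
    rw [hsplit, hibp1, hibp2, ← integral_add hint3 hint4]
    apply MeasureTheory.integral_congr_ae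
    filter_upwards with p
    ring
  -- step 4 : the final estimate
  set cc : ℝ := 6 * M * (S-1)⁻¹ with hccdef
  have hcc0 : 0 ≤ cc := by
    have := (ordS hS).le
    positivity
  set st : Set (ℝ×ℝ) := {p | uu p ≤ Real.exp 1} with hstdef
  have hstmeas : MeasurableSet st := by
    apply IsClosed.measurableSet
    exact isClosed_le huucont continuous_const
  set ζ : ℝ×ℝ → ℝ := st.indicator (fun _ => cc) with hζdef
  have hφφeq : ∀ p : ℝ×ℝ, φ11 p + φ22 p = 4 * (uu p * F2 S (uu p) + F1 S (uu p)) := by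
    intro p
    simp only [hφ11def, hφ22def, huu]
    ring
  have hgM : ∀ p : ℝ×ℝ, uu p ≤ Real.exp 1 → -M ≤ g p := by
    intro p hp
    have hmem : ψm p ∈ Metric.closedBall (0 : EuclideanSpace ℝ (Fin 2)) 2 := by
      rw [Metric.mem_closedBall, dist_zero_right, ψm_norm]
      rw [show (2:ℝ) = Real.sqrt 4 by rw [show (4:ℝ) = 2^2 by norm_num, Real.sqrt_sq]; norm_num]
      apply Real.sqrt_le_sqrt
      have : Real.exp 1 ≤ 4 := by
        have := Real.exp_one_lt_d9
        linarith
      simp only [huu] at hp ⊢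
      linarith
    have := hM (ψm p) hmem
    have habs : |v (ψm p)| ≤ M := by rwa [Real.norm_eq_abs] at this
    have := abs_le.1 habs
    simpa [hgdef] using this.1
  have hptwise : ∀ p : ℝ×ℝ, g p * (φ11 p + φ22 p) ≤ ζ p := by
    intro p
    rcases le_or_gt (uu p) (Real.exp 1) with h|h
    · -- inside : bounded estimate
      have hζp : ζ p = cc := Set.indicator_of_mem (by exact h) _
      rw [hζp, hφφeq p]
      have hlb := dlt_lb hS (u := uu p) h
      have hub := dlt_nonpos hS (u := uu p) h
      have hgm := hgM p h
      have hgneg' := (hgneg p).le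
      have h2 : -g p ≤ M := by linarith
      have h4 : -(uu p * F2 S (uu p) + F1 S (uu p)) ≤ (3/2)*(S-1)⁻¹ := by linarith
      have hmm := mul_le_mul h2 h4 (by linarith) hM0
      rw [hccdef]
      nlinarith [hmm]
    · -- outside : product nonpositive
      have hζp : ζ p = 0 := Set.indicator_of_notMem (by simp [hstdef]; exact h) _
      rw [hζp, hφφeq p]
      have hnn := dlt_nonneg hS (u := uu p) h.le
      have hgneg' := (hgneg p).le
      have := mul_nonpos_of_nonpos_of_nonneg hgneg' hnn
      nlinarith [this]
  -- ζ is integrable with small integral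
  have hstsub : st ⊆ Icc ((-2 : ℝ), (-2 : ℝ)) ((2:ℝ), (2:ℝ)) := by
    intro p hp
    simp only [hstdef, mem_setOf_eq, huu] at hp
    have he4 : Real.exp 1 ≤ 4 := by
      have := Real.exp_one_lt_d9
      linarith
    have h1 : p.1^2 ≤ 4 := by nlinarith [sq_nonneg p.2]
    have h2 : p.2^2 ≤ 4 := by nlinarith [sq_nonneg p.1]
    rw [mem_Icc, Prod.le_def, Prod.le_def]
    norm_num
    refine ⟨⟨?_, ?_⟩, ?_, ?_⟩ <;>
      nlinarith [sq_nonneg (p.1+2), sq_nonneg (p.1-2), sq_nonneg (p.2+2), sq_nonneg (p.2-2)]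
  have hstvol : volume st ≤ ENNReal.ofReal 16 := by
    calc volume st ≤ volume (Icc ((-2 : ℝ), (-2 : ℝ)) ((2:ℝ), (2:ℝ))) := measure_mono hstsub
      _ = ENNReal.ofReal 16 := by
          rw [Icc_prod_eq, Measure.volume_eq_prod, Measure.prod_prod]
          norm_num [Real.volume_Icc, ← ENNReal.ofReal_mul]
  have hsttoReal : (volume st).toReal ≤ 16 :=
    ENNReal.toReal_le_of_le_ofReal (by norm_num) hstvol
  have hζint : Integrable ζ := by
    rw [hζdef, integrable_indicator_iff hstmeas]
    exact integrableOn_const (ne_of_lt (lt_of_le_of_lt hstvol ENNReal.ofReal_lt_top))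
  have hζeval : ∫ p : ℝ×ℝ, ζ p = (volume st).toReal * cc := by
    rw [hζdef, integral_indicator_const cc hstmeas, smul_eq_mul, measureReal_def]
  have hintL : Integrable (fun p : ℝ×ℝ => g p * (φ11 p + φ22 p)) := by
    apply (hint3.add hint4).congr
    filter_upwards with p
    simp only [Pi.add_apply]
    ring
  have hfinal : (∫ p : ℝ×ℝ, g p * (φ11 p + φ22 p)) ≤ ∫ p : ℝ×ℝ, ζ p :=
    integral_mono hintL hζint hptwise
  have hbig : (∫ p : ℝ×ℝ, ζ p) ≤ 96 * M * (S-1)⁻¹ := by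
    rw [hζeval]
    calc (volume st).toReal * cc ≤ 16 * cc := mul_le_mul_of_nonneg_right hsttoReal hcc0
      _ = 96 * M * (S-1)⁻¹ := by rw [hccdef]; ring
  have : C ≤ 96 * M * (S-1)⁻¹ := by
    calc C ≤ ∫ x : EuclideanSpace ℝ (Fin 2), lap v x * F0 S (‖x‖^2) := hstep1
      _ = ∫ p : ℝ×ℝ, (P1 (P1 g) p + P2 (P2 g) p) * φ p := htrans
      _ = ∫ p : ℝ×ℝ, g p * (φ11 p + φ22 p) := hcomb
      _ ≤ ∫ p : ℝ×ℝ, ζ p := hfinal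
      _ ≤ 96 * M * (S-1)⁻¹ := hbig
  linarith
end
end

section
/- Let ε > 0 and let ψ(r) = r(1+r)⁵ e^{-εr²} / (2(r+4)) for r ≥ 0. If b ≥ ln(sup_{r≥0} ψ(r)), then the function ũ(r) = -εr² + ln(1+r) - b satisfies (r⁴ ũ'''(r))' ≥ r⁴ e^{ũ(r)} for all r > 0. -/
open Real Set

private lemma aux1 (ε b x : ℝ) (hx : (-1:ℝ) < x) :
    HasDerivAt (fun r : ℝ => -ε * r ^ 2 + Real.log (1 + r) - b)
      (-(2*ε)*x + (1+x)⁻¹) x := by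
  have hx1 : (0:ℝ) < 1 + x := by linarith
  have h1 : HasDerivAt (fun r : ℝ => -ε * r ^ 2) (-(2*ε)*x) x := by
    have := (hasDerivAt_pow 2 x).const_mul (-ε)
    exact this.congr_deriv (by simp; ring)
  have h2 : HasDerivAt (fun r : ℝ => Real.log (1 + r)) ((1+x)⁻¹) x := by
    have := (Real.hasDerivAt_log (ne_of_gt hx1)).comp x ((hasDerivAt_id x).const_add 1)
    simpa [Function.comp_def] using this
  exact (h1.add h2).sub_const b

private lemma aux2 (ε x : ℝ) (hx : (-1:ℝ) < x) :
    HasDerivAt (fun r : ℝ => -(2*ε)*r + (1+r)⁻¹)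
      (-(2*ε) - ((1+x)^2)⁻¹) x := by
  have hx1 : (0:ℝ) < 1 + x := by linarith
  have h1 : HasDerivAt (fun r : ℝ => -(2*ε)*r) (-(2*ε)) x := by
    simpa using (hasDerivAt_id x).const_mul (-(2*ε))
  have h2 : HasDerivAt (fun r : ℝ => (1+r)⁻¹) (-(((1+x)^2)⁻¹)) x := by
    have := ((hasDerivAt_id x).const_add 1).inv (ne_of_gt hx1)
    exact this.congr_deriv (by simp [neg_div])
  have h3 := h1.add h2
  exact h3.congr_deriv (by ring)

private lemma aux3 (ε x : ℝ) (hx : (-1:ℝ) < x) :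
    HasDerivAt (fun r : ℝ => -(2*ε) - ((1+r)^2)⁻¹)
      (2 * ((1+x)^3)⁻¹) x := by
  have hx1 : (0:ℝ) < 1 + x := by linarith
  have h2 : HasDerivAt (fun r : ℝ => (1+r)^2) (2*(1+x)) x := by
    have := ((hasDerivAt_id x).const_add 1).pow 2
    exact this.congr_deriv (by simp)
  have h3 : HasDerivAt (fun r : ℝ => ((1+r)^2)⁻¹) (-(2*(1+x)) / ((1+x)^2)^2) x :=
    h2.inv (by positivity)
  have h4 := (hasDerivAt_const x (-(2*ε))).sub h3
  exact h4.congr_deriv (by field_simp; ring)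

private lemma aux_iter (ε b x : ℝ) (hx : (-1:ℝ) < x) :
    iteratedDeriv 3 (fun r : ℝ => -ε * r ^ 2 + Real.log (1 + r) - b) x
      = 2 * ((1+x)^3)⁻¹ := by
  set f0 : ℝ → ℝ := fun r => -ε * r ^ 2 + Real.log (1 + r) - b with hf0
  have e1 : ∀ y ∈ Ioi (-1:ℝ), deriv f0 y = -(2*ε)*y + (1+y)⁻¹ := fun y hy =>
    (aux1 ε b y hy).deriv
  have e2 : ∀ y ∈ Ioi (-1:ℝ), deriv (deriv f0) y = -(2*ε) - ((1+y)^2)⁻¹ := by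
    intro y hy
    have hev : deriv f0 =ᶠ[nhds y] fun z => -(2*ε)*z + (1+z)⁻¹ :=
      Filter.eventuallyEq_of_mem (isOpen_Ioi.mem_nhds hy) e1
    rw [hev.deriv_eq]
    exact (aux2 ε y hy).deriv
  have e3 : deriv (deriv (deriv f0)) x = 2 * ((1+x)^3)⁻¹ := by
    have hev : deriv (deriv f0) =ᶠ[nhds x] fun z => -(2*ε) - ((1+z)^2)⁻¹ :=
      Filter.eventuallyEq_of_mem (isOpen_Ioi.mem_nhds hx) e2
    rw [hev.deriv_eq]
    exact (aux3 ε x hx).deriv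
  rw [show (3:ℕ) = 2 + 1 from rfl, iteratedDeriv_succ, iteratedDeriv_succ,
    iteratedDeriv_one]
  exact e3

private lemma aux_psi_bound (ε x : ℝ) (hε : 0 < ε) (hx : 0 ≤ x) :
    x * (1 + x) ^ 5 * Real.exp (-ε * x ^ 2) / (2 * (x + 4))
      ≤ 108 * Real.exp ε / ε^3 := by
  set E := Real.exp (-ε * x^2) with hE
  have hEpos : 0 < E := Real.exp_pos _
  have hEmul : Real.exp (ε * x^2) * E = 1 := by
    rw [hE, ← Real.exp_add]; ring_nf; exact Real.exp_zero
  have key : (1+x^2)^3 * E ≤ 27 * Real.exp ε / ε^3 := by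
    have ht : (0:ℝ) ≤ ε * (1+x^2) / 3 := by positivity
    have h1 : ε*(1+x^2)/3 + 1 ≤ Real.exp (ε*(1+x^2)/3) := by
      have := Real.add_one_le_exp (ε*(1+x^2)/3); linarith
    have h2 : (ε*(1+x^2)/3)^3 ≤ (Real.exp (ε*(1+x^2)/3))^3 := by
      apply pow_le_pow_left₀ ht; linarith
    have h3 : (Real.exp (ε*(1+x^2)/3))^3 = Real.exp (ε*(1+x^2)) := by
      rw [← Real.exp_nat_mul]; congr 1; push_cast; ring
    have h4 : ε^3 * (1+x^2)^3 / 27 ≤ Real.exp ε * Real.exp (ε * x^2) := by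
      rw [← Real.exp_add]
      calc ε^3 * (1+x^2)^3 / 27 = (ε*(1+x^2)/3)^3 := by ring
        _ ≤ Real.exp (ε*(1+x^2)) := h2.trans_eq h3
        _ = Real.exp (ε + ε * x^2) := by ring_nf
    have h5 : ε^3*(1+x^2)^3/27 * E ≤ Real.exp ε := by
      calc ε^3*(1+x^2)^3/27 * E ≤ (Real.exp ε * Real.exp (ε*x^2)) * E :=
            mul_le_mul_of_nonneg_right h4 hEpos.le
        _ = Real.exp ε * (Real.exp (ε*x^2) * E) := by ring
        _ = Real.exp ε := by rw [hEmul, mul_one]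
    rw [le_div_iff₀ (by positivity : (0:ℝ) < ε^3)]
    nlinarith [h5]
  have hx1 : (1:ℝ) ≤ 1 + x := by linarith
  have h61 : (1+x)^5 ≤ (1+x)^6 := pow_le_pow_right₀ hx1 (by norm_num)
  have h62 : (1+x)^6 ≤ 8*(1+x^2)^3 := by
    have hsq : (1+x)^2 ≤ 2*(1+x^2) := by nlinarith [sq_nonneg (1-x)]
    calc (1+x)^6 = ((1+x)^2)^3 := by ring
      _ ≤ (2*(1+x^2))^3 := pow_le_pow_left₀ (by positivity) hsq 3
      _ = 8*(1+x^2)^3 := by ring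
  have h6 : x*(1+x)^5 ≤ 8*(x+4)*(1+x^2)^3 := by
    calc x*(1+x)^5 ≤ (x+4)*(1+x)^5 :=
          mul_le_mul_of_nonneg_right (by linarith) (by positivity)
      _ ≤ (x+4)*(8*(1+x^2)^3) :=
          mul_le_mul_of_nonneg_left (h61.trans h62) (by linarith)
      _ = 8*(x+4)*(1+x^2)^3 := by ring
  calc x * (1+x)^5 * E / (2*(x+4)) ≤ 4*((1+x^2)^3*E) := by
        rw [div_le_iff₀ (by positivity : (0:ℝ) < 2*(x+4))]
        have := mul_le_mul_of_nonneg_right h6 hEpos.le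
        nlinarith [this]
    _ ≤ 4*(27*Real.exp ε/ε^3) := by linarith
    _ = 108*Real.exp ε/ε^3 := by ring

theorem stmt13 (ε b : ℝ) (hε : 0 < ε)
    (ψ : ℝ → ℝ)
    (hψ : ∀ r, ψ r = r * (1 + r) ^ 5 * Real.exp (-ε * r ^ 2) / (2 * (r + 4)))
    (hb : Real.log (sSup (ψ '' Set.Ici 0)) ≤ b)
    (w : ℝ → ℝ)
    (hw : ∀ r, w r = -ε * r ^ 2 + Real.log (1 + r) - b) :
    ∀ r > (0 : ℝ),
      r ^ 4 * Real.exp (w r) ≤ deriv (fun r => r ^ 4 * iteratedDeriv 3 w r) r := by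
  have hwe : w = fun r => -ε * r ^ 2 + Real.log (1 + r) - b := funext hw
  subst hwe
  have hbdd : BddAbove (ψ '' Set.Ici 0) := by
    refine ⟨108 * Real.exp ε / ε^3, ?_⟩
    rintro _ ⟨x, hx, rfl⟩
    rw [hψ]
    exact aux_psi_bound ε x hε hx
  have hψ1 : 0 < ψ 1 := by
    rw [hψ]; positivity
  have hsup_pos : 0 < sSup (ψ '' Set.Ici 0) :=
    hψ1.trans_le (le_csSup hbdd ⟨1, by norm_num, rfl⟩)
  have hsup_le : sSup (ψ '' Set.Ici 0) ≤ Real.exp b := by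
    rw [← Real.exp_log hsup_pos]
    exact Real.exp_le_exp.2 hb
  intro r hr
  have hr1 : (0:ℝ) < 1 + r := by linarith
  have hψr : ψ r ≤ Real.exp b :=
    (le_csSup hbdd ⟨r, hr.le, rfl⟩).trans hsup_le
  rw [hψ, div_le_iff₀ (by positivity : (0:ℝ) < 2*(r+4))] at hψr
  -- compute the derivative of the RHS
  have hev : (fun x => x ^ 4 * iteratedDeriv 3
        (fun r : ℝ => -ε * r ^ 2 + Real.log (1 + r) - b) x)
      =ᶠ[nhds r] fun x => x ^ 4 * (2 * ((1+x)^3)⁻¹) := by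
    refine Filter.eventuallyEq_of_mem (isOpen_Ioi.mem_nhds
      (show r ∈ Ioi (-1:ℝ) by simp; linarith)) ?_
    intro y hy
    simp only
    rw [aux_iter ε b y hy]
  rw [hev.deriv_eq]
  have hD : HasDerivAt (fun x : ℝ => x ^ 4 * (2 * ((1+x)^3)⁻¹))
      ((4*r^3) * (2 * ((1+r)^3)⁻¹) + r^4 * (-(2 * (3*(1+r)^2)) / ((1+r)^3)^2)) r := by
    have h1 : HasDerivAt (fun x : ℝ => (1+x)^3) (3*(1+r)^2) r := by
      have := ((hasDerivAt_id r).const_add 1).pow 3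
      exact this.congr_deriv (by simp)
    have h2 : HasDerivAt (fun x : ℝ => 2 * ((1+x)^3)⁻¹)
        (-(2 * (3*(1+r)^2)) / ((1+r)^3)^2) r := by
      have := (h1.inv (by positivity)).const_mul 2
      exact this.congr_deriv (by ring)
    have h3 : HasDerivAt (fun x : ℝ => x ^ 4) (4*r^3) r := by
      have := hasDerivAt_pow 4 r
      exact this.congr_deriv (by norm_num)
    exact h3.mul h2
  rw [hD.deriv]
  -- final inequality
  have hexp : Real.exp (-ε * r ^ 2 + Real.log (1 + r) - b)
      = Real.exp (-ε * r^2) * (1+r) / Real.exp b := by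
    rw [Real.exp_sub, Real.exp_add, Real.exp_log hr1]
  rw [hexp]
  set E := Real.exp (-ε * r^2) with hE
  set B := Real.exp b with hB
  have hEpos : 0 < E := Real.exp_pos _
  have hBpos : 0 < B := Real.exp_pos _
  -- hψr : r * (1+r)^5 * E ≤ B * (2*(r+4))
  have h5 : r^4 * (1+r)^5 * E ≤ 2 * r^3 * (r+4) * B := by
    have := mul_le_mul_of_nonneg_left hψr (by positivity : (0:ℝ) ≤ r^3)
    nlinarith [this]
  have target : r^4 * (E * (1+r)) ≤
      ((4*r^3) * (2 * ((1+r)^3)⁻¹) + r^4 * (-(2 * (3*(1+r)^2)) / ((1+r)^3)^2)) * B := by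
    have hrhs : (4*r^3) * (2 * ((1+r)^3)⁻¹) + r^4 * (-(2 * (3*(1+r)^2)) / ((1+r)^3)^2)
        = (2*r^3*(r+4)) / (1+r)^4 := by
      field_simp
      ring
    rw [hrhs, div_mul_eq_mul_div, le_div_iff₀ (by positivity : (0:ℝ) < (1+r)^4)]
    nlinarith [h5]
  calc r^4 * (E * (1+r) / B) = r^4 * (E * (1+r)) / B := by ring
    _ ≤ _ := by rw [div_le_iff₀ hBpos]; exact target
end

section
/- Let u : [0,∞) → ℝ be a C⁴ function satisfying (r⁴ u'''(r))' = r⁴ e^{u(r)} for all r > 0, with u'''(0) = 0, and suppose u(r) ≤ -Cr for all large r для some C > 0. Then ∫₀^∞ s⁴ e^{u(s)} ds < ∞ and u'''(r) ≤ r^{-4} ∫₀^∞ s⁴ e^{u(s)} ds for all r > 0. -/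
open MeasureTheory

theorem stmt14 (u : ℝ → ℝ) (hu : ContDiff ℝ 4 u)
    (heq : ∀ r > (0 : ℝ),
      deriv (fun r => r ^ 4 * iteratedDeriv 3 u r) r = r ^ 4 * Real.exp (u r))
    (hu3 : iteratedDeriv 3 u 0 = 0)
    (hdecay : ∃ C > (0 : ℝ), ∃ R : ℝ, ∀ r ≥ R, u r ≤ -C * r) :
    IntegrableOn (fun s => s ^ 4 * Real.exp (u s)) (Set.Ioi 0) ∧
      ∀ r > (0 : ℝ),
        iteratedDeriv 3 u r ≤ (r ^ 4)⁻¹ * ∫ s in Set.Ioi (0 : ℝ), s ^ 4 * Real.exp (u s) := by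
  obtain ⟨C, hC, R, hR⟩ := hdecay
  have hucont : Continuous u := hu.continuous
  have hgcont : Continuous (fun s : ℝ => s ^ 4 * Real.exp (u s)) := by
    continuity
  set M : ℝ := max R 1 with hM
  have hM1 : (1:ℝ) ≤ M := le_max_right _ _
  have hM0 : (0:ℝ) < M := lt_of_lt_of_le one_pos hM1
  -- integrability
  have hInt : IntegrableOn (fun s => s ^ 4 * Real.exp (u s)) (Set.Ioi 0) := by
    have h1 : IntegrableOn (fun s => s ^ 4 * Real.exp (u s)) (Set.Ioc 0 M) :=
      hgcont.integrableOn_Ioc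
    have hdom : IntegrableOn (fun x : ℝ => x ^ (4:ℝ) * Real.exp (-C * x ^ (1:ℝ)))
        (Set.Ioi M) := by
      exact (integrableOn_rpow_mul_exp_neg_mul_rpow (by norm_num) (by norm_num) hC).mono_set
        (Set.Ioi_subset_Ioi hM0.le)
    have h2 : IntegrableOn (fun s => s ^ 4 * Real.exp (u s)) (Set.Ioi M) := by
      refine Integrable.mono' hdom (hgcont.aestronglyMeasurable.restrict) ?_
      rw [ae_restrict_iff' measurableSet_Ioi]
      filter_upwards with x hx
      have hx0 : 0 < x := lt_trans hM0 hx
      have hxR : R ≤ x := le_trans (le_max_left _ _) hx.le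
      have hux : u x ≤ -C * x := hR x hxR
      have : x ^ (4:ℝ) = x ^ 4 := by
        rw [show (4:ℝ) = ((4:ℕ):ℝ) by norm_num, Real.rpow_natCast]
      rw [Real.norm_eq_abs, abs_of_nonneg (by positivity), this, Real.rpow_one]
      exact mul_le_mul_of_nonneg_left (Real.exp_le_exp.2 hux) (by positivity)
    have : Set.Ioi (0:ℝ) ⊆ Set.Ioc 0 M ∪ Set.Ioi M := by
      intro x hx
      rcases le_or_gt x M with h | h
      · exact Or.inl ⟨hx, h⟩
      · exact Or.inr h
    exact (h1.union h2).mono_set this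
  refine ⟨hInt, ?_⟩
  intro r hr
  -- FTC
  set F : ℝ → ℝ := fun r => r ^ 4 * iteratedDeriv 3 u r with hF
  have hdiff3 : Differentiable ℝ (iteratedDeriv 3 u) :=
    hu.differentiable_iteratedDeriv 3 (by norm_num)
  have hFdiff : Differentiable ℝ F :=
    (differentiable_pow 4).mul hdiff3
  have hftc : ∫ s in (0:ℝ)..r, s ^ 4 * Real.exp (u s) = F r - F 0 := by
    refine intervalIntegral.integral_eq_sub_of_hasDeriv_right_of_le hr.le
      (hFdiff.continuous.continuousOn) (fun x hx => ?_)
      (hgcont.intervalIntegrable 0 r)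
    have := (hFdiff x).hasDerivAt
    rw [heq x hx.1] at this
    exact this.hasDerivWithinAt
  have hF0 : F 0 = 0 := by simp [hF, hu3]
  have hkey : r ^ 4 * iteratedDeriv 3 u r
      ≤ ∫ s in Set.Ioi (0:ℝ), s ^ 4 * Real.exp (u s) := by
    have : r ^ 4 * iteratedDeriv 3 u r
        = ∫ s in Set.Ioc (0:ℝ) r, s ^ 4 * Real.exp (u s) := by
      rw [← intervalIntegral.integral_of_le hr.le, hftc, hF0, sub_zero]
    rw [this]
    refine setIntegral_mono_set hInt ?_ ?_
    · rw [Filter.EventuallyLE]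
      filter_upwards with x
      simp only [Pi.zero_apply]
      positivity
    · exact Filter.Eventually.of_forall (fun x hx => hx.1)
  have hr4 : (0:ℝ) < r ^ 4 := by positivity
  rw [inv_mul_eq_div, le_div_iff₀ hr4]
  linarith [hkey, mul_comm (r ^ 4) (iteratedDeriv 3 u r)]
end

section
/- Let N ≥ 1 and let u, w : [0,∞) → ℝ be C² with u'(0) = w'(0) = 0, u bounded below, u''(r) + (N-1)u'(r)/r = w(r) and w''(r) + (N-1)w'(r)/r < 0 for all r > 0. Then w(r) ≥ 0 for all r ≥ 0, and consequently u is nondecreasing on [0,∞). -/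
open Set

lemma stmt17_aux (N : ℕ) (hN : 1 ≤ N) (f : ℝ → ℝ) (hf1 : Differentiable ℝ (deriv f))
    {r : ℝ} (hr : 0 < r) :
    HasDerivAt (fun s => s ^ (N - 1) * deriv f s)
      (r ^ (N - 1) * (deriv (deriv f) r + ((N : ℝ) - 1) * deriv f r / r)) r := by
  have h1 : HasDerivAt (fun s : ℝ => s ^ (N - 1)) (↑(N - 1) * r ^ (N - 1 - 1)) r :=
    hasDerivAt_pow _ _
  have h2 : HasDerivAt (deriv f) (deriv (deriv f) r) r := (hf1 r).hasDerivAt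
  have h3 : HasDerivAt (fun s => s ^ (N - 1) * deriv f s)
      (↑(N - 1) * r ^ (N - 1 - 1) * deriv f r + r ^ (N - 1) * deriv (deriv f) r) r := h1.mul h2
  convert h3 using 1
  rcases N with _ | n
  · omega
  · simp only [Nat.add_sub_cancel]
    rcases n with _ | k
    · simp
    · have hr' : r ≠ 0 := ne_of_gt hr
      push_cast
      field_simp
      ring

theorem stmt17 (N : ℕ) (hN : 1 ≤ N) (u w : ℝ → ℝ)
    (hu : ContDiff ℝ 2 u) (hw : ContDiff ℝ 2 w)
    (hu0 : deriv u 0 = 0) (hw0 : deriv w 0 = 0)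
    (hbdd : BddBelow (u '' Set.Ici 0))
    (hequ : ∀ r > (0 : ℝ),
      deriv (deriv u) r + ((N : ℝ) - 1) * deriv u r / r = w r)
    (heqw : ∀ r > (0 : ℝ),
      deriv (deriv w) r + ((N : ℝ) - 1) * deriv w r / r < 0) :
    (∀ r ≥ (0 : ℝ), 0 ≤ w r) ∧ MonotoneOn u (Set.Ici 0) := by
  have h2 : (2 : WithTop ℕ∞) = 1 + 1 := by norm_num
  have hdu : Differentiable ℝ (deriv u) := by
    rw [h2] at hu; exact ((contDiff_succ_iff_deriv.mp hu).2.2).differentiable one_ne_zero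
  have hdw : Differentiable ℝ (deriv w) := by
    rw [h2] at hw; exact ((contDiff_succ_iff_deriv.mp hw).2.2).differentiable one_ne_zero
  have hcu : Continuous (deriv u) := hdu.continuous
  have hcw : Continuous (deriv w) := hdw.continuous
  have hNpos : (0 : ℝ) < N := by exact_mod_cast hN
  -- the auxiliary functions
  set gw : ℝ → ℝ := fun s => s ^ (N - 1) * deriv w s with hgw_def
  set gu : ℝ → ℝ := fun s => s ^ (N - 1) * deriv u s with hgu_def
  have hgw0 : gw 0 = 0 := by simp [hgw_def, hw0]
  have hgu0 : gu 0 = 0 := by simp [hgu_def, hu0]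
  have hgwc : Continuous gw := (continuous_pow _).mul hcw
  have hguc : Continuous gu := (continuous_pow _).mul hcu
  -- gw is strictly decreasing on Ici 0
  have hgw_anti : StrictAntiOn gw (Ici 0) := by
    apply strictAntiOn_of_deriv_neg (convex_Ici 0) hgwc.continuousOn
    intro x hx
    rw [interior_Ici] at hx
    rw [(stmt17_aux N hN w hdw hx).deriv]
    exact mul_neg_of_pos_of_neg (pow_pos hx _) (heqw x hx)
  -- hence deriv w < 0 on Ioi 0
  have hdw_neg : ∀ r > (0 : ℝ), deriv w r < 0 := by
    intro r hr
    have h := hgw_anti (le_refl (0:ℝ)) (le_of_lt hr) hr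
    rw [hgw0] at h
    by_contra hc
    push_neg at hc
    exact absurd (mul_nonneg (pow_nonneg hr.le _) hc) (not_le.mpr h)
  have hw_anti : StrictAntiOn w (Ici 0) := by
    apply strictAntiOn_of_deriv_neg (convex_Ici 0) hw.continuous.continuousOn
    intro x hx
    rw [interior_Ici] at hx
    exact hdw_neg x hx
  -- main claim : w ≥ 0
  have hwpos : ∀ r ≥ (0 : ℝ), 0 ≤ w r := by
    by_contra hc
    push_neg at hc
    obtain ⟨r₀, hr₀, hwr₀⟩ := hc
    set r₁ : ℝ := r₀ + 1 with hr₁def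
    have hr₁ : 0 < r₁ := by linarith
    have hw1 : w r₁ < 0 := lt_trans (hw_anti (Set.mem_Ici.mpr hr₀) (Set.mem_Ici.mpr (by linarith)) (by linarith)) hwr₀
    set c : ℝ := -w r₁ with hcdef
    have hc0 : 0 < c := by simp [hcdef]; linarith
    have hwle : ∀ r, r₁ ≤ r → w r ≤ -c := by
      intro r hr
      have : w r ≤ w r₁ := hw_anti.antitoneOn (Set.mem_Ici.mpr (le_of_lt hr₁)) (Set.mem_Ici.mpr (by linarith)) hr
      simp [hcdef]; linarith
    -- h := gu + (c/N) * r^N is antitone on Ici r₁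
    set h : ℝ → ℝ := fun s => gu s + (c / N) * s ^ N with hhdef
    have hh_deriv : ∀ r > (0 : ℝ), HasDerivAt h (r ^ (N - 1) * w r + c * r ^ (N - 1)) r := by
      intro r hr
      have h1 := stmt17_aux N hN u hdu hr
      have h2' : HasDerivAt (fun s : ℝ => (c / N) * s ^ N) ((c / N) * (↑N * r ^ (N - 1))) r :=
        (hasDerivAt_pow N r).const_mul _
      have h3 : HasDerivAt h (r ^ (N - 1) * (deriv (deriv u) r + ((N : ℝ) - 1) * deriv u r / r)
          + (c / N) * (↑N * r ^ (N - 1))) r := h1.add h2'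
      rw [hequ r hr] at h3
      convert h3 using 1
      have : (N : ℝ) ≠ 0 := ne_of_gt hNpos
      rw [← mul_assoc, div_mul_cancel₀ c this]
    have hh_diff : Differentiable ℝ h := by
      apply Differentiable.add
      · exact (differentiable_pow _).mul hdu
      · exact (differentiable_pow _).const_mul _
    have hh_anti : AntitoneOn h (Ici r₁) := by
      apply antitoneOn_of_deriv_nonpos (convex_Ici r₁) hh_diff.continuous.continuousOn
        hh_diff.differentiableOn
      intro x hx
      rw [interior_Ici] at hx
      have hx0 : (0 : ℝ) < x := lt_trans hr₁ hx
      rw [(hh_deriv x hx0).deriv]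
      have hwx : w x ≤ -c := hwle x (le_of_lt hx)
      have : x ^ (N - 1) * w x + c * x ^ (N - 1) = x ^ (N - 1) * (w x + c) := by ring
      rw [this]
      exact mul_nonpos_of_nonneg_of_nonpos (pow_nonneg hx0.le _) (by linarith)
    set B : ℝ := max (h r₁) 0 with hBdef
    have hB0 : 0 ≤ B := le_max_right _ _
    -- bound on deriv u for large r
    have hdub : ∀ r, max r₁ 1 ≤ r → deriv u r ≤ B - (c / N) * r := by
      intro r hr
      have hrr₁ : r₁ ≤ r := le_trans (le_max_left _ _) hr
      have hr1 : (1 : ℝ) ≤ r := le_trans (le_max_right _ _) hr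
      have hr0 : (0 : ℝ) < r := lt_of_lt_of_le one_pos hr1
      have hhr : h r ≤ h r₁ := hh_anti (le_refl r₁) hrr₁ hrr₁
      have hhB : h r ≤ B := le_trans hhr (le_max_left _ _)
      -- h r = r^(N-1) * deriv u r + (c/N) * r^N
      have hP1 : (1 : ℝ) ≤ r ^ (N - 1) := one_le_pow₀ hr1
      have hrn : r ^ N = r ^ (N - 1) * r := by
        conv_lhs => rw [show N = (N - 1) + 1 by omega]
        rw [pow_succ]
      have key : r ^ (N - 1) * (deriv u r + (c / N) * r) ≤ B := by
        have : h r = r ^ (N - 1) * (deriv u r + (c / N) * r) := by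
          simp only [hhdef, hgu_def, hrn]; ring
        linarith [this ▸ hhB]
      by_cases hX : 0 ≤ deriv u r + (c / N) * r
      · have : deriv u r + (c / N) * r ≤ r ^ (N - 1) * (deriv u r + (c / N) * r) :=
          le_mul_of_one_le_left hX hP1
        linarith
      · push_neg at hX
        linarith
    -- choose big R : deriv u ≤ -1 beyond R
    set R : ℝ := max (max r₁ 1) ((N / c) * (B + 1)) with hRdef
    have hdub2 : ∀ r, R ≤ r → deriv u r ≤ -1 := by
      intro r hr
      have h1 := hdub r (le_trans (le_max_left _ _) hr)
      have h2' : (N / c) * (B + 1) ≤ r := le_trans (le_max_right _ _) hr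
      have hcN : 0 < c / N := div_pos hc0 hNpos
      have : B + 1 ≤ (c / N) * r := by
        have := mul_le_mul_of_nonneg_left h2' (le_of_lt hcN)
        calc B + 1 = (c / N) * ((N / c) * (B + 1)) := by
              field_simp
            _ ≤ (c / N) * r := this
      linarith
    have hR0 : (0 : ℝ) < R := lt_of_lt_of_le one_pos (le_trans (le_max_right _ _) (le_max_left _ _))
    -- u r + r is antitone on Ici R
    have hphi : AntitoneOn (fun s => u s + s) (Ici R) := by
      apply antitoneOn_of_deriv_nonpos (convex_Ici R)
        ((hu.continuous.add continuous_id).continuousOn)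
        ((hu.differentiable (by norm_num)).add differentiable_id).differentiableOn
      intro x hx
      rw [interior_Ici] at hx
      have hd : HasDerivAt (fun s => u s + s) (deriv u x + 1) x :=
        ((hu.differentiable (by norm_num) x).hasDerivAt).add (hasDerivAt_id x)
      show deriv (fun s => u s + s) x ≤ 0
      rw [hd.deriv]
      have := hdub2 x (le_of_lt hx)
      linarith
    obtain ⟨m, hm⟩ := hbdd
    set r' : ℝ := max R (u R + R - m + 1) with hr'def
    have hr'R : R ≤ r' := le_max_left _ _
    have hub : u r' + r' ≤ u R + R := hphi (le_refl R) hr'R hr'R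
    have hmr' : m ≤ u r' := hm ⟨r', mem_Ici.mpr (le_trans hR0.le hr'R), rfl⟩
    have : u R + R - m + 1 ≤ r' := le_max_right _ _
    linarith
  refine ⟨hwpos, ?_⟩
  -- monotonicity of u
  have hgu_mono : MonotoneOn gu (Ici 0) := by
    apply monotoneOn_of_deriv_nonneg (convex_Ici 0) hguc.continuousOn
      (((differentiable_pow _).mul hdu).differentiableOn)
    intro x hx
    rw [interior_Ici] at hx
    have hd := stmt17_aux N hN u hdu hx
    rw [hd.deriv, hequ x hx]
    exact mul_nonneg (pow_nonneg hx.le _) (hwpos x hx.le)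
  have hdu_nonneg : ∀ x ∈ interior (Ici (0:ℝ)), 0 ≤ deriv u x := by
    intro x hx
    rw [interior_Ici] at hx
    have h := hgu_mono (le_refl (0:ℝ)) (mem_Ici.mpr (le_of_lt hx)) hx.le
    rw [hgu0] at h
    have hP : (0 : ℝ) < x ^ (N - 1) := pow_pos hx _
    exact nonneg_of_mul_nonneg_right h hP
  exact monotoneOn_of_deriv_nonneg (convex_Ici 0) hu.continuous.continuousOn
    (hu.differentiable (by norm_num)).differentiableOn hdu_nonneg
end

section
/- Let N ≥ 3, p > 0, and let u, w : [0,∞) → (0,∞) be C² functions with u'(0) = w'(0) = 0, w nonincreasing, u nondecreasing, u''(r) + (N-1)u'(r)/r = w(r), and w''(r) + (N-1)w'(r)/r = -u(r)^{-p} for r > 0. Then there exists C > 0 such that w(r) ≥ C r² u(r)^{-p} for all r > 0. -/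
open Set intervalIntegral

theorem stmt18 (N : ℕ) (hN : 3 ≤ N) (p : ℝ) (hp : 0 < p) (u w : ℝ → ℝ)
    (hu : ContDiff ℝ 2 u) (hw : ContDiff ℝ 2 w)
    (hupos : ∀ r ≥ (0 : ℝ), 0 < u r) (hwpos : ∀ r ≥ (0 : ℝ), 0 < w r)
    (hu0 : deriv u 0 = 0) (hw0 : deriv w 0 = 0)
    (hwmono : AntitoneOn w (Set.Ici 0)) (humono : MonotoneOn u (Set.Ici 0))
    (hequ : ∀ r > (0 : ℝ),
      deriv (deriv u) r + ((N : ℝ) - 1) * deriv u r / r = w r)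
    (heqw : ∀ r > (0 : ℝ),
      deriv (deriv w) r + ((N : ℝ) - 1) * deriv w r / r = -(u r) ^ (-p)) :
    ∃ C > (0 : ℝ), ∀ r > (0 : ℝ), C * r ^ 2 * (u r) ^ (-p) ≤ w r := by
  have hwc : Continuous (deriv w) := hw.continuous_deriv one_le_two
  have hwd : Differentiable ℝ (deriv w) := by
    have h2 : ContDiff ℝ ((1 : ℕ∞) + 1) w := by exact_mod_cast hw
    exact ((contDiff_succ_iff_deriv.mp h2).2.2).differentiable (by simp)
  set f : ℝ → ℝ := fun t => t ^ (N - 1) * u t ^ (-p) with hfdef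
  have hfnn : ∀ t : ℝ, 0 ≤ t → 0 ≤ f t := fun t ht =>
    mul_nonneg (pow_nonneg ht _) (Real.rpow_nonneg (hupos t ht).le _)
  have hfcont : ∀ a b : ℝ, 0 ≤ a → ContinuousOn f (Icc a b) := by
    intro a b ha
    exact (continuous_pow _).continuousOn.mul
      (hu.continuous.continuousOn.rpow_const fun t ht => Or.inl (hupos t (ha.trans ht.1)).ne')
  have hfint : ∀ a b : ℝ, 0 ≤ a → a ≤ b → IntervalIntegrable f MeasureTheory.volume a b := by
    intro a b ha hab
    exact ((hfcont a b ha).mono (by rw [uIcc_of_le hab])).intervalIntegrable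
  set G : ℝ → ℝ := fun s => s ^ (N - 1) * deriv w s with hGdef
  have hG : ∀ x > (0 : ℝ), HasDerivAt G (-f x) x := by
    intro x hx
    have h1 : HasDerivAt (fun s : ℝ => s ^ (N - 1)) (((N : ℝ) - 1) * x ^ (N - 2)) x := by
      have h := hasDerivAt_pow (N - 1) x
      have e1 : N - 1 - 1 = N - 2 := by omega
      have e2 : ((N - 1 : ℕ) : ℝ) = (N : ℝ) - 1 := by
        rw [Nat.cast_sub (by omega), Nat.cast_one]
      rw [e1, e2] at h; exact h
    have h2 : HasDerivAt (deriv w) (deriv (deriv w) x) x := (hwd x).hasDerivAt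
    have h3 := h1.mul h2
    have hdd : deriv (deriv w) x = -(u x ^ (-p)) - ((N : ℝ) - 1) * deriv w x / x := by
      have := heqw x hx
      linarith
    have hxp : x ^ (N - 1) = x ^ (N - 2) * x := by
      rw [← pow_succ]; congr 1; omega
    refine h3.congr_deriv ?_
    rw [hdd]
    simp only [hfdef, hxp]
    field_simp
    ring
  have hGeq : ∀ s : ℝ, 0 ≤ s → s ^ (N - 1) * deriv w s = -∫ t in (0 : ℝ)..s, f t := by
    intro s hs
    have hcont : ContinuousOn G (Icc 0 s) :=
      (continuous_pow _).continuousOn.mul hwc.continuousOn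
    have hint : IntervalIntegrable (fun t => -f t) MeasureTheory.volume 0 s :=
      (hfint 0 s le_rfl hs).neg
    have hftc := integral_eq_sub_of_hasDerivAt_of_le hs hcont
      (fun x hx => hG x hx.1) hint
    have hG0 : G 0 = 0 := by
      simp [hGdef, zero_pow (by omega : N - 1 ≠ 0)]
    rw [intervalIntegral.integral_neg] at hftc
    have : G s = -∫ t in (0:ℝ)..s, f t := by rw [hG0] at hftc; linarith
    exact this
  refine ⟨1 / (N * 2 ^ (N - 1)), by positivity, ?_⟩
  intro r hr
  set I : ℝ := ∫ t in (0 : ℝ)..r, f t with hIdef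
  -- lower bound on I
  have hI : u r ^ (-p) * (r ^ N / N) ≤ I := by
    have hmono : ∀ t ∈ Icc (0 : ℝ) r, u r ^ (-p) * t ^ (N - 1) ≤ f t := by
      intro t ht
      have h1 : u t ≤ u r := humono ht.1 hr.le ht.2
      have h2 : u r ^ (-p) ≤ u t ^ (-p) :=
        Real.rpow_le_rpow_of_nonpos (hupos t ht.1) h1 (by linarith)
      calc u r ^ (-p) * t ^ (N - 1) ≤ u t ^ (-p) * t ^ (N - 1) := by
            exact mul_le_mul_of_nonneg_right h2 (pow_nonneg ht.1 _)
        _ = f t := by ring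
    have hint1 : IntervalIntegrable (fun t => u r ^ (-p) * t ^ (N - 1))
        MeasureTheory.volume 0 r := (Continuous.intervalIntegrable (by continuity) _ _)
    have := intervalIntegral.integral_mono_on hr.le hint1 (hfint 0 r le_rfl hr.le) hmono
    have hcalc : (∫ t in (0 : ℝ)..r, u r ^ (-p) * t ^ (N - 1)) = u r ^ (-p) * (r ^ N / N) := by
      rw [intervalIntegral.integral_const_mul, integral_pow]
      have e1 : N - 1 + 1 = N := by omega
      rw [e1]
      have e2 : ((N - 1 : ℕ) : ℝ) + 1 = (N : ℝ) := by
        rw [Nat.cast_sub (by omega), Nat.cast_one]; ring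
      rw [e2, zero_pow (by omega : N ≠ 0)]
      ring
    rwa [hcalc] at this
  have hIpos : 0 < (2 * r) ^ (N - 1) := by positivity
  set c : ℝ := I / (2 * r) ^ (N - 1) with hcdef
  -- pointwise bound on -deriv w on [r, 2r]
  have hkey : ∀ s ∈ Icc r (2 * r), c ≤ -deriv w s := by
    intro s hs
    have hs0 : 0 < s := lt_of_lt_of_le hr hs.1
    have hI0 : (0:ℝ) ≤ I := intervalIntegral.integral_nonneg hr.le (fun t ht => hfnn t ht.1)
    have hIs : I ≤ ∫ t in (0 : ℝ)..s, f t := by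
      have hadd := intervalIntegral.integral_add_adjacent_intervals
        (hfint 0 r le_rfl hr.le) (hfint r s hr.le hs.1)
      have hnn : 0 ≤ ∫ t in r..s, f t :=
        intervalIntegral.integral_nonneg hs.1 (fun t ht => hfnn t (hr.le.trans ht.1))
      rw [← hadd]; linarith
    have hds : deriv w s = -(∫ t in (0 : ℝ)..s, f t) / s ^ (N - 1) := by
      have := hGeq s hs0.le
      field_simp at this ⊢
      linarith
    rw [hds]
    rw [neg_div, neg_neg]
    calc c = I / (2 * r) ^ (N - 1) := rfl
      _ ≤ (∫ t in (0 : ℝ)..s, f t) / s ^ (N - 1) := by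
          apply div_le_div₀ (hI0.trans hIs) hIs (pow_pos hs0 _)
          exact pow_le_pow_left₀ hs0.le hs.2 _
  -- FTC for w on [r, 2r]
  have hftcw : ∫ s in r..(2 * r), deriv w s = w (2 * r) - w r :=
    integral_deriv_eq_sub (fun x _ => hw.differentiable (by norm_num) x)
      (hwc.intervalIntegrable r (2 * r))
  have hr2 : r ≤ 2 * r := by linarith
  have hmono2 := intervalIntegral.integral_mono_on hr2
    (_root_.intervalIntegrable_const (μ := MeasureTheory.volume) (c := c)) ((hwc.neg.intervalIntegrable r (2 * r))) hkey
  simp only [Pi.neg_apply] at hmono2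
  rw [intervalIntegral.integral_neg, hftcw, intervalIntegral.integral_const] at hmono2
  -- hmono2 : (2*r - r) • c ≤ -(w (2*r) - w r)
  have hw2 : 0 < w (2 * r) := hwpos _ (by linarith)
  have hwr : r * c ≤ w r := by
    have : (2 * r - r) • c = r * c := by rw [smul_eq_mul]; ring
    rw [this] at hmono2; linarith
  -- final algebra
  have hfin : 1 / (N * 2 ^ (N - 1)) * r ^ 2 * u r ^ (-p) ≤ r * c := by
    have h1 : u r ^ (-p) * (r ^ N / N) / (2 * r) ^ (N - 1) ≤ c := by
      rw [hcdef]
      exact div_le_div_of_nonneg_right hI hIpos.le |>.trans_eq rfl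
    have h2 : 1 / (N * 2 ^ (N - 1)) * r ^ 2 * u r ^ (-p)
        = r * (u r ^ (-p) * (r ^ N / N) / (2 * r) ^ (N - 1)) := by
      have hNpos : (0 : ℝ) < N := by positivity
      have hrN : r ^ N = r ^ (N - 1) * r := by rw [← pow_succ]; congr 1; omega
      rw [mul_pow, hrN]
      field_simp
    rw [h2]
    have := mul_le_mul_of_nonneg_left h1 hr.le
    linarith
  linarith
end
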